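/- arXiv:2601.10881 — 7 statements merged into one kernel-verified Lean document; each statement's English description precedes it below -/
import Mathlib

section
/- Let K be an odd positive integer and let G be a K-edge-connected finite simple graph. Then G has no crossing K-cuts; that is, for any two vertex subsets X and Y with ∅ ≠ X ≠ V(G), ∅ ≠ Y ≠ V(G), |∂X| = K and |∂Y| = K, at least one of the four sets X∩Y, X∩(V∖Y), (V∖X)∩Y, (V∖X)∩(V∖Y) is empty. In other words, the family of K-cuts of G is laminar. -/
open SimpleGraph

variable {V : Type*}

/-- The cut `∂X`: the set of edges of `G` with exactly one endpoint in `X`. -/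
def cutEdges (G : SimpleGraph V) (X : Set V) : Set (Sym2 V) :=
  {e | e ∈ G.edgeSet ∧ ∃ u v, e = s(u, v) ∧ u ∈ X ∧ v ∉ X}

/-- `G` is `K`-edge-connected: at least two vertices, connected, and every cut has
at least `K` edges. -/
def KEdgeConnected (G : SimpleGraph V) (K : ℕ) : Prop :=
  Nontrivial V ∧ G.Connected ∧
    ∀ X : Set V, X.Nonempty → X ≠ Set.univ → K ≤ (cutEdges G X).ncard

/-- `∂X` is a `K`-cut. -/
def IsKCut (G : SimpleGraph V) (K : ℕ) (X : Set V) : Prop :=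
  X.Nonempty ∧ X ≠ Set.univ ∧ (cutEdges G X).ncard = K

/-- The cuts `∂X` and `∂Y` cross. -/
def Crossing (X Y : Set V) : Prop :=
  (X ∩ Y).Nonempty ∧ (X ∩ Yᶜ).Nonempty ∧ (Xᶜ ∩ Y).Nonempty ∧ (Xᶜ ∩ Yᶜ).Nonempty

/-- The set of vertices reachable from `u` in `T` after deleting the edge `e`;
for a spanning tree `T` and an edge `e` of `T` with endpoint `u`, this is the shore
of the cut induced by `e` containing `u`. -/
def treeSide (T : SimpleGraph V) (u : V) (e : Sym2 V) : Set V :=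
  {x | (T.deleteEdges {e}).Reachable u x}

/-- The congestion of the edge `(u,v)` of a spanning tree `T` of `G`. -/
noncomputable def edgeCong (G T : SimpleGraph V) (u v : V) : ℕ :=
  (cutEdges G (treeSide T u s(u, v))).ncard

/-- The spanning tree `T` of `G` has congestion at most `K`. -/
def CongAtMost (G T : SimpleGraph V) (K : ℕ) : Prop :=
  ∀ u v, T.Adj u v → edgeCong G T u v ≤ K

/-- The congestion of a spanning tree `T` of `G`. -/
noncomputable def treeCongestion (G T : SimpleGraph V) : ℕ :=
  sSup {n | ∃ u v, T.Adj u v ∧ n = edgeCong G T u v}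

/-- The spanning-tree congestion of `G`. -/
noncomputable def stc (G : SimpleGraph V) : ℕ :=
  sInf {n | ∃ T : SimpleGraph V, T ≤ G ∧ T.IsTree ∧ treeCongestion G T = n}

/-- `T_out(w,e)`: the vertex set of the component of the tree `H − e` not containing `w`
(the vertices of `H` that are no longer reachable from `w` after deleting `e`). -/
def treeOut (G : SimpleGraph V) (H : G.Subgraph) (w : V) (e : Sym2 V) : Set V :=
  {x ∈ H.verts | ¬ (H.deleteEdges {e}).spanningCoe.Reachable w x}

/-- The rooted tree `(H, w)` is safe (with parameter `K`). -/
def SafeTree (G : SimpleGraph V) (K : ℕ) (H : G.Subgraph) (w : V) : Prop :=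
  ∀ e ∈ H.edgeSet, (cutEdges G (treeOut G H w e)).ncard = K

/-- `V(∂X)`: the set of endpoints of edges of the cut `∂X`. -/
def cutVerts (G : SimpleGraph V) (X : Set V) : Set V :=
  {v | ∃ e ∈ cutEdges G X, v ∈ e}

/-- `w` is a hub for `Z`: `w ∈ V(∂Z)` and there is a spanning tree `H` of the subgraph
of `G` induced by `Z ∪ {w}` such that `(H, w)` is a safe tree. -/
def IsHub (G : SimpleGraph V) (K : ℕ) (Z : Set V) (w : V) : Prop :=
  w ∈ cutVerts G Z ∧
    ∃ H : G.Subgraph, H.verts = Z ∪ {w} ∧ H.coe.IsTree ∧ SafeTree G K H w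

/-- `H̃(Z)`: the set of all hubs for `Z`. -/
def hubSet (G : SimpleGraph V) (K : ℕ) (Z : Set V) : Set V :=
  {w | IsHub G K Z w}

/-- `N(S)`: the set of vertices adjacent in `G` to some vertex of `S`. -/
def nbrSet (G : SimpleGraph V) (S : Set V) : Set V :=
  {v | ∃ u ∈ S, G.Adj u v}

/-- Edges of `∂X` with both endpoints in `S`. -/
def cutRestrict (G : SimpleGraph V) (X S : Set V) : Set (Sym2 V) :=
  {e ∈ cutEdges G X | ∀ v ∈ e, v ∈ S}

/-- Edges of `G` with one endpoint in `S` and the other in `T`. -/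
def eB (G : SimpleGraph V) (S T : Set V) : Set (Sym2 V) :=
  {e | e ∈ G.edgeSet ∧ ∃ u v, e = s(u, v) ∧ u ∈ S ∧ v ∈ T}

lemma eB_comm (G : SimpleGraph V) (S T : Set V) : eB G S T = eB G T S := by
  ext e
  simp only [eB, Set.mem_setOf_eq]
  constructor <;> rintro ⟨he, u, v, rfl, hu, hv⟩ <;>
    exact ⟨he, v, u, Sym2.eq_swap.symm, hv, hu⟩

lemma cutEdges_eq_eB (G : SimpleGraph V) (X : Set V) : cutEdges G X = eB G X Xᶜ := rfl

lemma eB_union_right (G : SimpleGraph V) (S U W : Set V) :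
    eB G S (U ∪ W) = eB G S U ∪ eB G S W := by
  ext e
  simp only [eB, Set.mem_setOf_eq, Set.mem_union]
  constructor
  · rintro ⟨he, u, v, rfl, hu, hv | hv⟩
    · exact Or.inl ⟨he, u, v, rfl, hu, hv⟩
    · exact Or.inr ⟨he, u, v, rfl, hu, hv⟩
  · rintro (⟨he, u, v, rfl, hu, hv⟩ | ⟨he, u, v, rfl, hu, hv⟩)
    exacts [⟨he, u, v, rfl, hu, Or.inl hv⟩, ⟨he, u, v, rfl, hu, Or.inr hv⟩]

lemma eB_union_left (G : SimpleGraph V) (S T U : Set V) :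
    eB G (S ∪ T) U = eB G S U ∪ eB G T U := by
  rw [eB_comm, eB_union_right, eB_comm G U S, eB_comm G U T]

lemma eB_disj (G : SimpleGraph V) {S T U W : Set V}
    (h1 : Disjoint S T ∨ Disjoint U W) (h2 : Disjoint S W ∨ Disjoint U T) :
    Disjoint (eB G S U) (eB G T W) := by
  rw [Set.disjoint_left]
  rintro e ⟨-, u, v, rfl, hu, hv⟩ ⟨-, u', v', heq, hu', hv'⟩
  rcases Sym2.eq_iff.mp heq with ⟨h3, h4⟩ | ⟨h3, h4⟩
  · rcases h1 with h | h
    · exact (h.ne_of_mem hu hu') h3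
    · exact (h.ne_of_mem hv hv') h4
  · rcases h2 with h | h
    · exact (h.ne_of_mem hu hv') h3
    · exact (h.ne_of_mem hv hu') h4

lemma ncard_eB_three [Fintype V] (G : SimpleGraph V) {S P Q R : Set V}
    (hPQ : Disjoint P Q) (hPR : Disjoint P R) (hQR : Disjoint Q R)
    (hSP : Disjoint S P) (hSQ : Disjoint S Q) (hSR : Disjoint S R) :
    (eB G S (P ∪ Q ∪ R)).ncard =
      (eB G S P).ncard + (eB G S Q).ncard + (eB G S R).ncard := by
  rw [eB_union_right, eB_union_right]
  have douter : Disjoint (eB G S P ∪ eB G S Q) (eB G S R) := by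
    apply Disjoint.union_left
    · exact eB_disj G (Or.inr hPR) (Or.inl hSR)
    · exact eB_disj G (Or.inr hQR) (Or.inl hSR)
  rw [Set.ncard_union_eq douter (Set.toFinite _) (Set.toFinite _),
    Set.ncard_union_eq (eB_disj G (Or.inr hPQ) (Or.inl hSQ))
      (Set.toFinite _) (Set.toFinite _)]

lemma ncard_eB_four [Fintype V] (G : SimpleGraph V) {S T U W : Set V}
    (hST : Disjoint S T) (hSU : Disjoint S U) (hSW : Disjoint S W)
    (hTU : Disjoint T U) (hTW : Disjoint T W) (hUW : Disjoint U W) :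
    (eB G (S ∪ T) (U ∪ W)).ncard =
      (eB G S U).ncard + (eB G S W).ncard + (eB G T U).ncard + (eB G T W).ncard := by
  rw [eB_union_right, eB_union_left, eB_union_left]
  have d1 : Disjoint (eB G S U ∪ eB G T U) (eB G S W ∪ eB G T W) := by
    apply Disjoint.union_left <;> apply Disjoint.union_right
    · exact eB_disj G (Or.inr hUW) (Or.inl hSW)
    · exact eB_disj G (Or.inl hST) (Or.inl hSW)
    · exact eB_disj G (Or.inl hST.symm) (Or.inl hTW)
    · exact eB_disj G (Or.inr hUW) (Or.inl hTW)
  rw [Set.ncard_union_eq d1 (Set.toFinite _) (Set.toFinite _),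
    Set.ncard_union_eq (eB_disj G (Or.inl hST) (Or.inl hSU))
      (Set.toFinite _) (Set.toFinite _),
    Set.ncard_union_eq (eB_disj G (Or.inl hST) (Or.inl hSW))
      (Set.toFinite _) (Set.toFinite _)]
  ring

/-- If `K` is odd and `G` is `K`-edge-connected, then `G` has no
crossing `K`-cuts: the family of `K`-cuts of `G` is laminar. -/
theorem odd_K_cuts_laminar {V : Type*} [Fintype V] (K : ℕ) (hKpos : 0 < K) (hKodd : Odd K)
    (G : SimpleGraph V) (hG : KEdgeConnected G K)
    (X Y : Set V) (hX : IsKCut G K X) (hY : IsKCut G K Y) :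
    X ∩ Y = ∅ ∨ X ∩ Yᶜ = ∅ ∨ Xᶜ ∩ Y = ∅ ∨ Xᶜ ∩ Yᶜ = ∅ := by
  by_contra hcon
  push_neg at hcon
  obtain ⟨hA, hB, hC, hD⟩ := hcon
  set A := X ∩ Y with hAdef
  set B := X ∩ Yᶜ with hBdef
  set C := Xᶜ ∩ Y with hCdef
  set D := Xᶜ ∩ Yᶜ with hDdef
  have dAB : Disjoint A B := by
    rw [Set.disjoint_left]; rintro a ⟨_, h1⟩ ⟨_, h2⟩; exact h2 h1
  have dAC : Disjoint A C := by
    rw [Set.disjoint_left]; rintro a ⟨h1, _⟩ ⟨h2, _⟩; exact h2 h1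
  have dAD : Disjoint A D := by
    rw [Set.disjoint_left]; rintro a ⟨h1, _⟩ ⟨h2, _⟩; exact h2 h1
  have dBC : Disjoint B C := by
    rw [Set.disjoint_left]; rintro a ⟨h1, _⟩ ⟨h2, _⟩; exact h2 h1
  have dBD : Disjoint B D := by
    rw [Set.disjoint_left]; rintro a ⟨h1, _⟩ ⟨h2, _⟩; exact h2 h1
  have dCD : Disjoint C D := by
    rw [Set.disjoint_left]; rintro a ⟨_, h1⟩ ⟨_, h2⟩; exact h2 h1
  have hXu : X = A ∪ B := by
    ext a; by_cases h : a ∈ Y <;> simp [hAdef, hBdef, h] <;> tauto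
  have hXc : Xᶜ = C ∪ D := by
    ext a; by_cases h : a ∈ Y <;> simp [hCdef, hDdef, h] <;> tauto
  have hYu : Y = A ∪ C := by
    ext a; by_cases h : a ∈ X <;> simp [hAdef, hCdef, h] <;> tauto
  have hYc : Yᶜ = B ∪ D := by
    ext a; by_cases h : a ∈ X <;> simp [hBdef, hDdef, h] <;> tauto
  have hAc : Aᶜ = B ∪ C ∪ D := by
    ext a; by_cases h1 : a ∈ X <;> by_cases h2 : a ∈ Y <;>
      simp [hAdef, hBdef, hCdef, hDdef, h1, h2]
  have hBc : Bᶜ = A ∪ C ∪ D := by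
    ext a; by_cases h1 : a ∈ X <;> by_cases h2 : a ∈ Y <;>
      simp [hAdef, hBdef, hCdef, hDdef, h1, h2]
  have hCc : Cᶜ = A ∪ B ∪ D := by
    ext a; by_cases h1 : a ∈ X <;> by_cases h2 : a ∈ Y <;>
      simp [hAdef, hBdef, hCdef, hDdef, h1, h2]
  have hDc : Dᶜ = A ∪ B ∪ C := by
    ext a; by_cases h1 : a ∈ X <;> by_cases h2 : a ∈ Y <;>
      simp [hAdef, hBdef, hCdef, hDdef, h1, h2]
  -- the six relevant edge counts
  set p := (eB G A B).ncard with hp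
  set q := (eB G A C).ncard with hq
  set x := (eB G A D).ncard with hx
  set y := (eB G B C).ncard with hy
  set r := (eB G B D).ncard with hr
  set s := (eB G C D).ncard with hs
  have hdX : (cutEdges G X).ncard = q + x + y + r := by
    rw [cutEdges_eq_eB, hXc]
    rw [show eB G X (C ∪ D) = eB G (A ∪ B) (C ∪ D) by rw [← hXu]]
    rw [ncard_eB_four G dAB dAC dAD dBC dBD dCD]
  have hdY : (cutEdges G Y).ncard = p + x + y + s := by
    rw [cutEdges_eq_eB, hYc]
    rw [show eB G Y (B ∪ D) = eB G (A ∪ C) (B ∪ D) by rw [← hYu]]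
    rw [ncard_eB_four G dAC dAB dAD dBC.symm dCD dBD]
    rw [show eB G C B = eB G B C from eB_comm G C B]
  have hdA : (cutEdges G A).ncard = p + q + x := by
    rw [cutEdges_eq_eB, hAc, ncard_eB_three G dBC dBD dCD dAB dAC dAD]
  have hdB : (cutEdges G B).ncard = p + y + r := by
    rw [cutEdges_eq_eB, hBc, ncard_eB_three G dAC dAD dCD dAB.symm dBC dBD]
    rw [show eB G B A = eB G A B from eB_comm G B A]
  have hdC : (cutEdges G C).ncard = q + y + s := by
    rw [cutEdges_eq_eB, hCc, ncard_eB_three G dAB dAD dBD dAC.symm dBC.symm dCD]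
    rw [show eB G C A = eB G A C from eB_comm G C A,
      show eB G C B = eB G B C from eB_comm G C B]
  have hdD : (cutEdges G D).ncard = x + r + s := by
    rw [cutEdges_eq_eB, hDc, ncard_eB_three G dAB dAC dBC dAD.symm dBD.symm dCD.symm]
    rw [show eB G D A = eB G A D from eB_comm G D A,
      show eB G D B = eB G B D from eB_comm G D B,
      show eB G D C = eB G C D from eB_comm G D C]
  obtain ⟨-, -, hmin⟩ := hG
  have neuniv : ∀ {P Q : Set V}, Disjoint P Q → Q.Nonempty → P ≠ Set.univ := by
    intro P Q hPQ ⟨a, ha⟩ h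
    exact (hPQ.ne_of_mem (h ▸ Set.mem_univ a) ha) rfl
  have bA : K ≤ (cutEdges G A).ncard := hmin A hA (neuniv dAD hD)
  have bB : K ≤ (cutEdges G B).ncard := hmin B hB (neuniv dBC hC)
  have bC : K ≤ (cutEdges G C).ncard := hmin C hC (neuniv dBC.symm hB)
  have bD : K ≤ (cutEdges G D).ncard := hmin D hD (neuniv dAD.symm hA)
  have eX : (cutEdges G X).ncard = K := hX.2.2
  have eY : (cutEdges G Y).ncard = K := hY.2.2
  obtain ⟨m, hm⟩ := hKodd
  omega
end

section
/- Let K be an even positive integer and let G be a K-edge-connected finite simple graph. Let ∂X and ∂Y be two crossing K-cuts of G. Then each of the four sets ∂X|_Y (edges of ∂X with both endpoints in Y), ∂X|_{V∖Y}, ∂Y|_X, and ∂Y|_{V∖X} has exactly K/2 edges. Moreover, G has no edges between X∩Y and (V∖X)∩(V∖Y), and no edges between X∩(V∖Y) and (V∖X)∩Y. -/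
open SimpleGraph

variable {V : Type*}

def eBetw (G : SimpleGraph V) (P Q : Set V) : Set (Sym2 V) :=
  {e | e ∈ G.edgeSet ∧ ∃ u v, e = s(u, v) ∧ u ∈ P ∧ v ∈ Q}

lemma cutEdges_eq_eBetw (G : SimpleGraph V) (X : Set V) : cutEdges G X = eBetw G X Xᶜ := rfl

lemma eBetw_comm (G : SimpleGraph V) (P Q : Set V) : eBetw G P Q = eBetw G Q P := by
  ext e
  constructor <;> rintro ⟨he, u, v, rfl, hu, hv⟩ <;> exact ⟨he, v, u, Sym2.eq_swap, hv, hu⟩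

lemma eBetw_union_left (G : SimpleGraph V) (P P' Q : Set V) :
    eBetw G (P ∪ P') Q = eBetw G P Q ∪ eBetw G P' Q := by
  ext e
  simp only [eBetw, Set.mem_union, Set.mem_setOf_eq]
  constructor
  · rintro ⟨he, u, v, rfl, (hu | hu), hv⟩
    · exact Or.inl ⟨he, u, v, rfl, hu, hv⟩
    · exact Or.inr ⟨he, u, v, rfl, hu, hv⟩
  · rintro (⟨he, u, v, rfl, hu, hv⟩ | ⟨he, u, v, rfl, hu, hv⟩)
    · exact ⟨he, u, v, rfl, Or.inl hu, hv⟩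
    · exact ⟨he, u, v, rfl, Or.inr hu, hv⟩

lemma eBetw_union_right (G : SimpleGraph V) (P Q Q' : Set V) :
    eBetw G P (Q ∪ Q') = eBetw G P Q ∪ eBetw G P Q' := by
  rw [eBetw_comm, eBetw_union_left, eBetw_comm G Q, eBetw_comm G Q']

lemma eBetw_disjoint (G : SimpleGraph V) {P Q P' Q' : Set V}
    (h1 : Disjoint P P' ∨ Disjoint Q Q') (h2 : Disjoint P Q' ∨ Disjoint Q P') :
    Disjoint (eBetw G P Q) (eBetw G P' Q') := by
  rw [Set.disjoint_left]
  rintro e ⟨he, u, v, rfl, hu, hv⟩ ⟨_, u', v', huv, hu', hv'⟩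
  rw [Sym2.eq_iff] at huv
  rcases huv with ⟨rfl, rfl⟩ | ⟨rfl, rfl⟩
  · rcases h1 with h | h
    · exact Set.disjoint_left.mp h hu hu'
    · exact Set.disjoint_left.mp h hv hv'
  · rcases h2 with h | h
    · exact Set.disjoint_left.mp h hu hv'
    · exact Set.disjoint_left.mp h hv hu'

lemma ncard_union_disj {α : Type*} [Finite α] {s t : Set α} (h : Disjoint s t) :
    (s ∪ t).ncard = s.ncard + t.ncard :=
  Set.ncard_union_eq h (Set.toFinite _) (Set.toFinite _)

lemma ncard_eBetw_union4 {V : Type*} [Finite V] (G : SimpleGraph V) {A B C D : Set V}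
    (hAB : Disjoint A B) (hAC : Disjoint A C) (hAD : Disjoint A D)
    (hBC : Disjoint B C) (hBD : Disjoint B D) (hCD : Disjoint C D) :
    (eBetw G (A ∪ B) (C ∪ D)).ncard =
      (eBetw G A C).ncard + (eBetw G A D).ncard +
        ((eBetw G B C).ncard + (eBetw G B D).ncard) := by
  rw [eBetw_union_left, eBetw_union_right, eBetw_union_right]
  have d1 : Disjoint (eBetw G A C) (eBetw G A D) := eBetw_disjoint G (Or.inr hCD) (Or.inl hAD)
  have d2 : Disjoint (eBetw G B C) (eBetw G B D) := eBetw_disjoint G (Or.inr hCD) (Or.inl hBD)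
  have d3 : Disjoint (eBetw G A C ∪ eBetw G A D) (eBetw G B C ∪ eBetw G B D) := by
    simp only [Set.disjoint_union_left, Set.disjoint_union_right]
    exact ⟨⟨eBetw_disjoint G (Or.inl hAB) (Or.inl hAC),
            eBetw_disjoint G (Or.inl hAB) (Or.inl hAC)⟩,
           ⟨eBetw_disjoint G (Or.inl hAB) (Or.inl hAD),
            eBetw_disjoint G (Or.inl hAB) (Or.inl hAD)⟩⟩
  rw [ncard_union_disj d3, ncard_union_disj d1, ncard_union_disj d2]

lemma ncard_eBetw_union3 {V : Type*} [Finite V] (G : SimpleGraph V) {P Q R S : Set V}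
    (hPR : Disjoint P R) (hPS : Disjoint P S) (hQR : Disjoint Q R)
    (hQS : Disjoint Q S) (hRS : Disjoint R S) :
    (eBetw G P (Q ∪ (R ∪ S))).ncard =
      (eBetw G P Q).ncard + ((eBetw G P R).ncard + (eBetw G P S).ncard) := by
  rw [eBetw_union_right, eBetw_union_right]
  have d1 : Disjoint (eBetw G P R) (eBetw G P S) := eBetw_disjoint G (Or.inr hRS) (Or.inl hPS)
  have d2 : Disjoint (eBetw G P Q) (eBetw G P R ∪ eBetw G P S) := by
    rw [Set.disjoint_union_right]
    exact ⟨eBetw_disjoint G (Or.inr hQR) (Or.inl hPR),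
           eBetw_disjoint G (Or.inr hQS) (Or.inl hPS)⟩
  rw [ncard_union_disj d2, ncard_union_disj d1]

/-- If `K` is even and `G` is `K`-edge-connected and `∂X`, `∂Y` are
crossing `K`-cuts, then the four restricted cuts each have exactly `K/2` edges, and
there are no edges between `X∩Y` and `Xᶜ∩Yᶜ`, nor between `X∩Yᶜ` and `Xᶜ∩Y`. -/
theorem even_K_crossing_cuts {V : Type*} [Fintype V] (K : ℕ) (hKpos : 0 < K)
    (hKeven : Even K) (G : SimpleGraph V) (hG : KEdgeConnected G K)
    (X Y : Set V) (hX : IsKCut G K X) (hY : IsKCut G K Y) (hXY : Crossing X Y) :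
    (cutRestrict G X Y).ncard = K / 2 ∧
    (cutRestrict G X Yᶜ).ncard = K / 2 ∧
    (cutRestrict G Y X).ncard = K / 2 ∧
    (cutRestrict G Y Xᶜ).ncard = K / 2 ∧
    (∀ u v, G.Adj u v → u ∈ X ∩ Y → v ∉ Xᶜ ∩ Yᶜ) ∧
    (∀ u v, G.Adj u v → u ∈ X ∩ Yᶜ → v ∉ Xᶜ ∩ Y) := by
  obtain ⟨hXne, hXu, hXcard⟩ := hX
  obtain ⟨hYne, hYu, hYcard⟩ := hY
  obtain ⟨hA, hB, hC, hD⟩ := hXY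
  obtain ⟨_, _, hcut⟩ := hG
  set A := X ∩ Y with hAdef
  set B := X ∩ Yᶜ with hBdef
  set C := Xᶜ ∩ Y with hCdef
  set D := Xᶜ ∩ Yᶜ with hDdef
  -- pairwise disjointness
  have dABh : Disjoint A B := Set.disjoint_left.mpr (by rintro x ⟨_, hy⟩ ⟨_, hy'⟩; exact hy' hy)
  have dACh : Disjoint A C := Set.disjoint_left.mpr (by rintro x ⟨hx, _⟩ ⟨hx', _⟩; exact hx' hx)
  have dADh : Disjoint A D := Set.disjoint_left.mpr (by rintro x ⟨hx, _⟩ ⟨hx', _⟩; exact hx' hx)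
  have dBCh : Disjoint B C := Set.disjoint_left.mpr (by rintro x ⟨hx, _⟩ ⟨hx', _⟩; exact hx' hx)
  have dBDh : Disjoint B D := Set.disjoint_left.mpr (by rintro x ⟨hx, _⟩ ⟨hx', _⟩; exact hx' hx)
  have dCDh : Disjoint C D := Set.disjoint_left.mpr (by rintro x ⟨_, hy⟩ ⟨_, hy'⟩; exact hy' hy)
  -- set identities
  have hXAB : X = A ∪ B := by
    ext x; by_cases h1 : x ∈ X <;> by_cases h2 : x ∈ Y <;> simp [hAdef, hBdef, h1, h2]
  have hXc : Xᶜ = C ∪ D := by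
    ext x; by_cases h1 : x ∈ X <;> by_cases h2 : x ∈ Y <;> simp [hCdef, hDdef, h1, h2]
  have hYAC : Y = A ∪ C := by
    ext x; by_cases h1 : x ∈ X <;> by_cases h2 : x ∈ Y <;> simp [hAdef, hCdef, h1, h2]
  have hYc : Yᶜ = B ∪ D := by
    ext x; by_cases h1 : x ∈ X <;> by_cases h2 : x ∈ Y <;> simp [hBdef, hDdef, h1, h2]
  have hAc : Aᶜ = B ∪ (C ∪ D) := by
    ext x; by_cases h1 : x ∈ X <;> by_cases h2 : x ∈ Y <;>
      simp [hAdef, hBdef, hCdef, hDdef, h1, h2]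
  have hBc : Bᶜ = A ∪ (C ∪ D) := by
    ext x; by_cases h1 : x ∈ X <;> by_cases h2 : x ∈ Y <;>
      simp [hAdef, hBdef, hCdef, hDdef, h1, h2]
  have hCc : Cᶜ = A ∪ (B ∪ D) := by
    ext x; by_cases h1 : x ∈ X <;> by_cases h2 : x ∈ Y <;>
      simp [hAdef, hBdef, hCdef, hDdef, h1, h2]
  have hDc : Dᶜ = A ∪ (B ∪ C) := by
    ext x; by_cases h1 : x ∈ X <;> by_cases h2 : x ∈ Y <;>
      simp [hAdef, hBdef, hCdef, hDdef, h1, h2]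
  -- the quadrants are nonempty and proper
  have hAneu : A ≠ Set.univ := by
    intro h; obtain ⟨x, hx1, _⟩ := hD
    exact hx1 ((h ▸ Set.mem_univ x : x ∈ A)).1
  have hBneu : B ≠ Set.univ := by
    intro h; obtain ⟨x, hx1, _⟩ := hC
    exact hx1 ((h ▸ Set.mem_univ x : x ∈ B)).1
  have hCneu : C ≠ Set.univ := by
    intro h; obtain ⟨x, hx1, _⟩ := hB
    exact ((h ▸ Set.mem_univ x : x ∈ C)).1 hx1
  have hDneu : D ≠ Set.univ := by
    intro h; obtain ⟨x, hx1, _⟩ := hA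
    exact ((h ▸ Set.mem_univ x : x ∈ D)).1 hx1
  -- cut cardinality computations
  have cardX : (cutEdges G X).ncard =
      (eBetw G A C).ncard + (eBetw G A D).ncard +
        ((eBetw G B C).ncard + (eBetw G B D).ncard) := by
    rw [cutEdges_eq_eBetw, hXc, hXAB]
    exact ncard_eBetw_union4 G dABh dACh dADh dBCh dBDh dCDh
  have cardY : (cutEdges G Y).ncard =
      (eBetw G A B).ncard + (eBetw G A D).ncard +
        ((eBetw G B C).ncard + (eBetw G C D).ncard) := by
    rw [cutEdges_eq_eBetw, hYc, hYAC,
      ncard_eBetw_union4 G dACh dABh dADh dBCh.symm dCDh dBDh, eBetw_comm G C B]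
  have cardA : (cutEdges G A).ncard =
      (eBetw G A B).ncard + ((eBetw G A C).ncard + (eBetw G A D).ncard) := by
    rw [cutEdges_eq_eBetw, hAc]
    exact ncard_eBetw_union3 G dACh dADh dBCh dBDh dCDh
  have cardB : (cutEdges G B).ncard =
      (eBetw G A B).ncard + ((eBetw G B C).ncard + (eBetw G B D).ncard) := by
    rw [cutEdges_eq_eBetw, hBc,
      ncard_eBetw_union3 G dBCh dBDh dACh dADh dCDh, eBetw_comm G B A]
  have cardC : (cutEdges G C).ncard =
      (eBetw G A C).ncard + ((eBetw G B C).ncard + (eBetw G C D).ncard) := by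
    rw [cutEdges_eq_eBetw, hCc,
      ncard_eBetw_union3 G dBCh.symm dCDh dABh dADh dBDh,
      eBetw_comm G C A, eBetw_comm G C B]
  have cardD : (cutEdges G D).ncard =
      (eBetw G A D).ncard + ((eBetw G B D).ncard + (eBetw G C D).ncard) := by
    rw [cutEdges_eq_eBetw, hDc,
      ncard_eBetw_union3 G dBDh.symm dCDh.symm dABh dACh dBCh,
      eBetw_comm G D A, eBetw_comm G D B, eBetw_comm G D C]
  have E1 := hXcard; rw [cardX] at E1
  have E2 := hYcard; rw [cardY] at E2
  have IA := hcut A hA hAneu; rw [cardA] at IA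
  have IB := hcut B hB hBneu; rw [cardB] at IB
  have IC := hcut C hC hCneu; rw [cardC] at IC
  have ID := hcut D hD hDneu; rw [cardD] at ID
  have hK2 : K % 2 = 0 := Nat.even_iff.mp hKeven
  -- identify restricted cuts
  have gr1 : cutRestrict G X Y = eBetw G A C := by
    ext e
    constructor
    · rintro ⟨⟨he, u, v, rfl, hu, hv⟩, hall⟩
      exact ⟨he, u, v, rfl, ⟨hu, hall u (Sym2.mem_mk_left u v)⟩,
        hv, hall v (Sym2.mem_mk_right u v)⟩
    · rintro ⟨he, u, v, rfl, ⟨hu1, hu2⟩, hv1, hv2⟩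
      refine ⟨⟨he, u, v, rfl, hu1, hv1⟩, ?_⟩
      intro w hw
      rcases Sym2.mem_iff.mp hw with rfl | rfl
      · exact hu2
      · exact hv2
  have gr2 : cutRestrict G X Yᶜ = eBetw G B D := by
    ext e
    constructor
    · rintro ⟨⟨he, u, v, rfl, hu, hv⟩, hall⟩
      exact ⟨he, u, v, rfl, ⟨hu, hall u (Sym2.mem_mk_left u v)⟩,
        hv, hall v (Sym2.mem_mk_right u v)⟩
    · rintro ⟨he, u, v, rfl, ⟨hu1, hu2⟩, hv1, hv2⟩
      refine ⟨⟨he, u, v, rfl, hu1, hv1⟩, ?_⟩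
      intro w hw
      rcases Sym2.mem_iff.mp hw with rfl | rfl
      · exact hu2
      · exact hv2
  have gr3 : cutRestrict G Y X = eBetw G A B := by
    ext e
    constructor
    · rintro ⟨⟨he, u, v, rfl, hu, hv⟩, hall⟩
      exact ⟨he, u, v, rfl, ⟨hall u (Sym2.mem_mk_left u v), hu⟩,
        hall v (Sym2.mem_mk_right u v), hv⟩
    · rintro ⟨he, u, v, rfl, ⟨hu1, hu2⟩, hv1, hv2⟩
      refine ⟨⟨he, u, v, rfl, hu2, hv2⟩, ?_⟩
      intro w hw
      rcases Sym2.mem_iff.mp hw with rfl | rfl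
      · exact hu1
      · exact hv1
  have gr4 : cutRestrict G Y Xᶜ = eBetw G C D := by
    ext e
    constructor
    · rintro ⟨⟨he, u, v, rfl, hu, hv⟩, hall⟩
      exact ⟨he, u, v, rfl, ⟨hall u (Sym2.mem_mk_left u v), hu⟩,
        hall v (Sym2.mem_mk_right u v), hv⟩
    · rintro ⟨he, u, v, rfl, ⟨hu1, hu2⟩, hv1, hv2⟩
      refine ⟨⟨he, u, v, rfl, hu2, hv2⟩, ?_⟩
      intro w hw
      rcases Sym2.mem_iff.mp hw with rfl | rfl
      · exact hu1
      · exact hv1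
  have hAD0 : eBetw G A D = ∅ := by
    rw [← Set.ncard_eq_zero (Set.toFinite _)]
    omega
  have hBC0 : eBetw G B C = ∅ := by
    rw [← Set.ncard_eq_zero (Set.toFinite _)]
    omega
  refine ⟨?_, ?_, ?_, ?_, ?_, ?_⟩
  · rw [gr1]; omega
  · rw [gr2]; omega
  · rw [gr3]; omega
  · rw [gr4]; omega
  · intro u v hadj hu hv
    have : s(u, v) ∈ eBetw G A D := ⟨G.mem_edgeSet.mpr hadj, u, v, rfl, hu, hv⟩
    rw [hAD0] at this
    exact this
  · intro u v hadj hu hv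
    have : s(u, v) ∈ eBetw G B C := ⟨G.mem_edgeSet.mpr hadj, u, v, rfl, hu, hv⟩
    rw [hBC0] at this
    exact this
end

section
/- Let G be a K-edge-connected finite simple graph and let T̃ be a spanning tree of G with congestion at most K. Let w be a vertex of G and let Z_1, ..., Z_d be pairwise disjoint nonempty vertex sets whose union is V(G)∖{w}, such that each ∂Z_i is a K-cut of G, and such that for every K-cut ∂Y of G there exists an index j with Y ⊆ Z_j or V(G)∖Y ⊆ Z_j. Then every edge of T̃ that belongs to some ∂Z_i is incident to w; that is, T̃ ∩ (∂Z_1 ∪ ... ∪ ∂Z_d) ⊆ E_w, where E_w is the set of edges of G incident to w. -/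
open SimpleGraph

variable {V : Type*}

section AuxProof

variable {V : Type*}

lemma tree_bridge' {T : SimpleGraph V} (hT : T.IsTree) {u v : V} (h : T.Adj u v) :
    ¬ (T.deleteEdges {s(u,v)}).Reachable u v := by
  have hb := (isAcyclic_iff_forall_adj_isBridge.mp hT.IsAcyclic) h
  rw [isBridge_iff] at hb
  exact hb

lemma cover_aux' {T : SimpleGraph V} {u v : V} :
    ∀ {a b : V}, T.Walk a b →
      ((T.deleteEdges {s(u,v)}).Reachable u a ∨ (T.deleteEdges {s(u,v)}).Reachable v a) →
      ((T.deleteEdges {s(u,v)}).Reachable u b ∨ (T.deleteEdges {s(u,v)}).Reachable v b) := by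
  intro a b p
  induction p with
  | nil => exact id
  | @cons a b' c hab p ih =>
    intro ha
    apply ih
    by_cases he : s(a,b') = s(u,v)
    · rw [Sym2.eq_iff] at he
      rcases he with ⟨_, rfl⟩ | ⟨_, rfl⟩
      · exact Or.inr (SimpleGraph.Reachable.refl _)
      · exact Or.inl (SimpleGraph.Reachable.refl _)
    · have hadj : (T.deleteEdges {s(u,v)}).Adj a b' := by
        rw [SimpleGraph.deleteEdges_adj]; exact ⟨hab, he⟩
      exact ha.imp (fun r => r.trans hadj.reachable) (fun r => r.trans hadj.reachable)

lemma tree_cover' {T : SimpleGraph V} (hT : T.IsTree) {u v : V} (x : V) :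
    (T.deleteEdges {s(u,v)}).Reachable u x ∨ (T.deleteEdges {s(u,v)}).Reachable v x := by
  obtain ⟨p⟩ := hT.isConnected (u := u) (v := x)
  exact cover_aux' p (Or.inl (SimpleGraph.Reachable.refl _))

lemma side_kcut' [Fintype V] {K : ℕ} {G T : SimpleGraph V} (hG : KEdgeConnected G K)
    (hTcong : CongAtMost G T K) {w a b : V} (hab : T.Adj a b)
    (hw : ¬ (T.deleteEdges {s(a,b)}).Reachable a w) :
    IsKCut G K (treeSide T a s(a,b)) := by
  have hne : (treeSide T a s(a,b)).Nonempty := ⟨a, SimpleGraph.Reachable.refl _⟩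
  have hnu : treeSide T a s(a,b) ≠ Set.univ := by
    intro h
    exact hw (by have : w ∈ treeSide T a s(a,b) := h ▸ Set.mem_univ w; exact this)
  exact ⟨hne, hnu, le_antisymm (hTcong a b hab) (hG.2.2 _ hne hnu)⟩

lemma helper_no_bad_edge {V : Type*} [Fintype V] (K : ℕ)
    (G : SimpleGraph V) (hG : KEdgeConnected G K)
    (T : SimpleGraph V) (hTtree : T.IsTree) (hTcong : CongAtMost G T K)
    (w : V) (d : ℕ) (Z : Fin d → Set V)
    (hdisj : ∀ i j, i ≠ j → Disjoint (Z i) (Z j))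
    (hunion : (⋃ i, Z i) = {w}ᶜ)
    (hlam : ∀ Y : Set V, IsKCut G K Y → ∃ j, Y ⊆ Z j ∨ Yᶜ ⊆ Z j)
    (u v : V) (hadj : T.Adj u v) (hmem : s(u, v) ∈ ⋃ i, cutEdges G (Z i))
    (hu : u ≠ w) (hv : v ≠ w)
    (hwside : ¬ (T.deleteEdges {s(u,v)}).Reachable u w) : False := by
  classical
  have hwZ : ∀ k, w ∉ Z k := by
    intro k hk
    have : w ∈ ⋃ i, Z i := Set.mem_iUnion.mpr ⟨k, hk⟩
    rw [hunion] at this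
    exact this rfl
  have memZ : ∀ x : V, x ≠ w → ∃ k, x ∈ Z k := by
    intro x hx
    exact Set.mem_iUnion.mp (by rw [hunion]; exact hx)
  have sameZ : ∀ {x : V} {j k : Fin d}, x ∈ Z j → x ∈ Z k → j = k := by
    intro x j k hj hk
    by_contra hne
    exact Set.disjoint_left.mp (hdisj j k hne) hj hk
  -- the u-side of the edge uv is a K-cut contained in some Z j
  have hKu := side_kcut' hG hTcong hadj hwside
  obtain ⟨j, hj⟩ := hlam _ hKu
  have hSj : treeSide T u s(u,v) ⊆ Z j := by
    rcases hj with hj | hj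
    · exact hj
    · exact absurd (hj hwside) (hwZ j)
  have huj : u ∈ Z j := hSj (SimpleGraph.Reachable.refl _)
  obtain ⟨b, hvb⟩ := memZ v hv
  -- j ≠ b
  obtain ⟨i, hi⟩ := Set.mem_iUnion.mp hmem
  obtain ⟨-, a', b', heq, ha', hb'⟩ := hi
  have hjb : j ≠ b := by
    rw [Sym2.eq_iff] at heq
    rcases heq with ⟨h1, h2⟩ | ⟨h1, h2⟩
    · -- u = a', v = b' : u ∈ Z i, v ∉ Z i
      have hij : i = j := sameZ (h1 ▸ ha') huj
      intro hjb'
      have hvi : v ∈ Z i := by rw [hij, hjb']; exact hvb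
      exact hb' (h2 ▸ hvi)
    · -- u = b', v = a' : v ∈ Z i, u ∉ Z i
      have hib : i = b := sameZ (h2 ▸ ha') hvb
      intro hjb'
      have hui : u ∈ Z i := by rw [hib, ← hjb']; exact huj
      exact hb' (h1 ▸ hui)
  -- take the first edge of a path from v to w
  obtain ⟨p0⟩ := hTtree.isConnected (u := v) (v := w)
  obtain ⟨q, hq⟩ := p0.toPath
  cases q with
  | nil => exact hv rfl
  | @cons _ p' _ h' t =>
    have hfnt : s(v, p') ∉ t.edges := by
      have := hq.edges_nodup
      rw [SimpleGraph.Walk.edges_cons, List.nodup_cons] at this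
      exact this.1
    have hne_ef : s(u,v) ≠ s(v,p') := by
      intro heq2
      rw [Sym2.eq_iff] at heq2
      rcases heq2 with ⟨h1, h2⟩ | ⟨h1, h2⟩
      · exact hadj.ne h1
      · -- p' = u
        apply hwside
        refine ⟨SimpleGraph.Walk.toDeleteEdges {s(u,v)} (h1 ▸ t) ?_⟩
        intro e he hee
        rw [Set.mem_singleton_iff] at hee
        subst hee
        apply hfnt
        have : s(v, p') = s(u, v) := by rw [← h1, Sym2.eq_swap]
        rw [this]
        cases h1
        exact he
    have hwside' : ¬ (T.deleteEdges {s(v,p')}).Reachable v w := by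
      intro hr'
      have rt : (T.deleteEdges {s(v,p')}).Reachable p' w :=
        ⟨SimpleGraph.Walk.toDeleteEdges {s(v,p')} t
          (fun e he hee => hfnt (Set.mem_singleton_iff.mp hee ▸ he))⟩
      exact tree_bridge' hTtree h' (hr'.trans rt.symm)
    have hKv := side_kcut' hG hTcong h' hwside'
    obtain ⟨c, hc⟩ := hlam _ hKv
    have hSc : treeSide T v s(v,p') ⊆ Z c := by
      rcases hc with hc | hc
      · exact hc
      · exact absurd (hc hwside') (hwZ c)
    have hvc : v ∈ Z c := hSc (SimpleGraph.Reachable.refl _)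
    have hcb : c = b := sameZ hvc hvb
    have huS' : u ∈ treeSide T v s(v,p') := by
      have hadj' : (T.deleteEdges {s(v,p')}).Adj v u := by
        rw [SimpleGraph.deleteEdges_adj]
        refine ⟨hadj.symm, ?_⟩
        rw [Set.mem_singleton_iff, Sym2.eq_swap]
        exact hne_ef
      exact hadj'.reachable
    have hub : u ∈ Z b := hcb ▸ hSc huS'
    exact hjb (sameZ huj hub)

end AuxProof

/-- (Lemma: basic `K`-cuts associated with a Type-1 node.) If
`Z_1, …, Z_d` partition `V ∖ {w}` into `K`-cuts such that every `K`-cut has a shore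
inside some `Z_j`, then every edge of a congestion-`K` spanning tree `T̃` crossing
some `∂Z_i` is incident to `w`. -/
theorem tree_edges_in_basic_cuts_incident_type1 {V : Type*} [Fintype V] (K : ℕ)
    (G : SimpleGraph V) (hG : KEdgeConnected G K)
    (T : SimpleGraph V) (hTle : T ≤ G) (hTtree : T.IsTree) (hTcong : CongAtMost G T K)
    (w : V) (d : ℕ) (Z : Fin d → Set V)
    (hdisj : ∀ i j, i ≠ j → Disjoint (Z i) (Z j))
    (hne : ∀ i, (Z i).Nonempty)
    (hunion : (⋃ i, Z i) = {w}ᶜ)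
    (hcuts : ∀ i, IsKCut G K (Z i))
    (hlam : ∀ Y : Set V, IsKCut G K Y → ∃ j, Y ⊆ Z j ∨ Yᶜ ⊆ Z j) :
    ∀ u v : V, T.Adj u v → s(u, v) ∈ ⋃ i, cutEdges G (Z i) → u = w ∨ v = w := by
  intro u v hadj hmem
  by_contra hcon
  push_neg at hcon
  obtain ⟨hu, hv⟩ := hcon
  rcases tree_cover' (u := u) (v := v) hTtree w with hru | hrv
  · -- w on u-side: v-side avoids w
    have hw' : ¬ (T.deleteEdges {s(v,u)}).Reachable v w := by
      rw [Sym2.eq_swap]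
      intro hc
      exact tree_bridge' hTtree hadj (hru.trans hc.symm)
    have hmem' : s(v, u) ∈ ⋃ i, cutEdges G (Z i) := by rw [Sym2.eq_swap]; exact hmem
    exact helper_no_bad_edge K G hG T hTtree hTcong w d Z hdisj hunion hlam
      v u hadj.symm hmem' hv hu hw'
  · have hw' : ¬ (T.deleteEdges {s(u,v)}).Reachable u w := by
      intro hc
      exact tree_bridge' hTtree hadj (hc.trans hrv.symm)
    exact helper_no_bad_edge K G hG T hTtree hTcong w d Z hdisj hunion hlam
      u v hadj hmem hu hv hw'
end

section
/- Let G be a K-edge-connected finite simple graph, let T̃ be a spanning tree of G with congestion at most K, and let ∂Z be a K-cut of G that does not cross any K-cut of G. Then all edges in T̃ ∩ ∂Z have a common endpoint; that is, there is a vertex w of G such that every edge of T̃ belonging to ∂Z is incident to w. -/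
open SimpleGraph

variable {V : Type*}

section auxlemmas

variable {G T : SimpleGraph V}

private lemma mem_cut_cases {Z : Set V} {u v : V} (h : s(u, v) ∈ cutEdges G Z) :
    (u ∈ Z ∧ v ∉ Z) ∨ (v ∈ Z ∧ u ∉ Z) := by
  obtain ⟨-, p, q, hpq, hp, hq⟩ := h
  rw [Sym2.eq_iff] at hpq
  rcases hpq with ⟨rfl, rfl⟩ | ⟨rfl, rfl⟩
  · exact Or.inl ⟨hp, hq⟩
  · exact Or.inr ⟨hp, hq⟩

private lemma path_edge_disconnects (hac : T.IsAcyclic) {u v : V} {p : T.Walk u v}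
    (hp : p.IsPath) {g : Sym2 V} (hg : g ∈ p.edges) :
    ¬ (T.deleteEdges {g}).Reachable u v := by
  classical
  intro hr
  obtain ⟨w⟩ := hr
  set q := w.toPath with hq
  have hsub : ∀ e ∈ (q : (T.deleteEdges {g}).Walk u v).edges, e ∈ T.edgeSet := by
    intro e he
    have h1 := (q : (T.deleteEdges {g}).Walk u v).edges_subset_edgeSet he
    rw [edgeSet_deleteEdges] at h1
    exact h1.1
  have hpath : ((q : (T.deleteEdges {g}).Walk u v).transfer T hsub).IsPath :=
    q.2.transfer hsub
  have huniq := (SimpleGraph.isAcyclic_iff_path_unique.mp hac)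
    (⟨(q : (T.deleteEdges {g}).Walk u v).transfer T hsub, hpath⟩ : T.Path u v) ⟨p, hp⟩
  have hval : (q : (T.deleteEdges {g}).Walk u v).transfer T hsub = p :=
    congrArg Subtype.val huniq
  have hgq : g ∈ (q : (T.deleteEdges {g}).Walk u v).edges := by
    rw [← SimpleGraph.Walk.edges_transfer _ hsub, hval]; exact hg
  have := (q : (T.deleteEdges {g}).Walk u v).edges_subset_edgeSet hgq
  rw [edgeSet_deleteEdges] at this
  exact this.2 rfl

private lemma reachable_delete_or {x y : V} {u v : V} (w : T.Walk u v)
    (h : (T.deleteEdges {s(x, y)}).Reachable x u ∨ (T.deleteEdges {s(x, y)}).Reachable y u) :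
    (T.deleteEdges {s(x, y)}).Reachable x v ∨ (T.deleteEdges {s(x, y)}).Reachable y v := by
  induction w with
  | nil => exact h
  | @cons a c b hac' q ih =>
    apply ih
    by_cases hg : s(a, c) = s(x, y)
    · rw [Sym2.eq_iff] at hg
      rcases hg with ⟨rfl, rfl⟩ | ⟨rfl, rfl⟩
      · exact Or.inr (SimpleGraph.Reachable.refl _)
      · exact Or.inl (SimpleGraph.Reachable.refl _)
    · have hadj : (T.deleteEdges {s(x, y)}).Adj a c := by
        rw [SimpleGraph.deleteEdges_adj]
        exact ⟨hac', by simpa using hg⟩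
      rcases h with h | h
      · exact Or.inl (h.trans hadj.reachable)
      · exact Or.inr (h.trans hadj.reachable)

private lemma reachable_delete_total (hconn : T.Connected) (x y v : V) :
    (T.deleteEdges {s(x, y)}).Reachable x v ∨ (T.deleteEdges {s(x, y)}).Reachable y v :=
  reachable_delete_or ((hconn.preconnected x v).some)
    (Or.inl (SimpleGraph.Reachable.refl _))

private lemma sep_aux (hac : T.IsAcyclic) {a a' b b' : V}
    (he : T.Adj a a') (hf : T.Adj b b')
    (h1 : (T.deleteEdges {s(a, a')}).Reachable a' b')
    (h2 : (T.deleteEdges {s(b, b')}).Reachable b' a')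
    (ha'b' : a' ≠ b') :
    ∃ x y : V, T.Adj x y ∧ a ∈ treeSide T x s(x, y) ∧ a' ∈ treeSide T x s(x, y) ∧
      b ∉ treeSide T x s(x, y) ∧ b' ∉ treeSide T x s(x, y) := by
  classical
  have hreach : T.Reachable a' b' := h1.mono (SimpleGraph.deleteEdges_le _)
  obtain ⟨pw, hpw⟩ := hreach.some.toPath
  cases pw with
  | nil => exact absurd rfl ha'b'
  | @cons _ c _ h rest =>
    have hgmem : s(a', c) ∈ (SimpleGraph.Walk.cons h rest).edges := by
      simp [SimpleGraph.Walk.edges_cons]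
    have hnr : ¬ (T.deleteEdges {s(a', c)}).Reachable a' b' :=
      path_edge_disconnects hac hpw hgmem
    have hge : s(a', c) ≠ s(a, a') := by
      intro hgE
      rw [hgE] at hnr
      exact hnr h1
    have hgf : s(a', c) ≠ s(b, b') := by
      intro hgE
      rw [hgE] at hnr
      exact hnr h2.symm
    refine ⟨a', c, h, ?_, SimpleGraph.Reachable.refl _, ?_, hnr⟩
    · have hadj : (T.deleteEdges {s(a', c)}).Adj a' a := by
        rw [SimpleGraph.deleteEdges_adj]
        refine ⟨he.symm, ?_⟩
        simp only [Set.mem_singleton_iff]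
        intro hcon
        exact hge (by rw [← hcon]; exact Sym2.eq_swap)
      exact hadj.reachable
    · intro hb
      apply hnr
      have hadj : (T.deleteEdges {s(a', c)}).Adj b b' := by
        rw [SimpleGraph.deleteEdges_adj]
        exact ⟨hf, by simpa using hgf.symm⟩
      exact hb.trans hadj.reachable

private lemma sep (hconn : T.Connected) (hac : T.IsAcyclic) {a a' b b' : V}
    (he : T.Adj a a') (hf : T.Adj b b')
    (hab : a ≠ b) (hab' : a ≠ b') (ha'b : a' ≠ b) (ha'b' : a' ≠ b') :
    ∃ x y : V, T.Adj x y ∧ a ∈ treeSide T x s(x, y) ∧ a' ∈ treeSide T x s(x, y) ∧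
      b ∉ treeSide T x s(x, y) ∧ b' ∉ treeSide T x s(x, y) := by
  have hef : s(a, a') ≠ s(b, b') := by
    intro hcon
    rw [Sym2.eq_iff] at hcon
    rcases hcon with ⟨rfl, rfl⟩ | ⟨rfl, rfl⟩
    · exact hab rfl
    · exact hab' rfl
  have eE : T.deleteEdges {s(a', a)} = T.deleteEdges {s(a, a')} := by
    rw [Sym2.eq_swap]
  have eF : T.deleteEdges {s(b', b)} = T.deleteEdges {s(b, b')} := by
    rw [Sym2.eq_swap]
  have hbb'e : (T.deleteEdges {s(a, a')}).Adj b b' := by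
    rw [SimpleGraph.deleteEdges_adj]
    exact ⟨hf, by simpa using hef.symm⟩
  have haa'f : (T.deleteEdges {s(b, b')}).Adj a a' := by
    rw [SimpleGraph.deleteEdges_adj]
    exact ⟨he, by simpa using hef⟩
  rcases reachable_delete_total hconn a a' b' with h1 | h1
  · -- a reaches b' in T−e : swap roles of a, a'
    have h1S : (T.deleteEdges {s(a', a)}).Reachable a b' := by rw [eE]; exact h1
    rcases reachable_delete_total hconn b b' a with h2 | h2
    · -- b reaches a in T−f : swap roles of b, b'
      have h1S' : (T.deleteEdges {s(a', a)}).Reachable a b := by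
        rw [eE]; exact h1.trans hbb'e.symm.reachable
      have h2S : (T.deleteEdges {s(b', b)}).Reachable b a := by rw [eF]; exact h2
      obtain ⟨x, y, hxy, m1, m2, m3, m4⟩ :=
        sep_aux hac he.symm hf.symm h1S' h2S hab
      exact ⟨x, y, hxy, m2, m1, m4, m3⟩
    · obtain ⟨x, y, hxy, m1, m2, m3, m4⟩ :=
        sep_aux hac he.symm hf h1S h2 hab'
      exact ⟨x, y, hxy, m2, m1, m3, m4⟩
  · rcases reachable_delete_total hconn b b' a' with h2 | h2
    · -- b reaches a' in T−f : swap roles of b, b'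
      have h1' : (T.deleteEdges {s(a, a')}).Reachable a' b :=
        h1.trans hbb'e.symm.reachable
      have h2S : (T.deleteEdges {s(b', b)}).Reachable b a' := by rw [eF]; exact h2
      obtain ⟨x, y, hxy, m1, m2, m3, m4⟩ :=
        sep_aux hac he hf.symm h1' h2S ha'b
      exact ⟨x, y, hxy, m1, m2, m4, m3⟩
    · exact sep_aux hac he hf h1 h2 ha'b'

private lemma no_triangle (hac : T.IsAcyclic) {w z0 z1 : V}
    (h0 : T.Adj w z0) (h1 : T.Adj w z1) (h2 : T.Adj z0 z1) : False := by
  have hpath : (SimpleGraph.Walk.cons h0.symm (SimpleGraph.Walk.cons h1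
      SimpleGraph.Walk.nil)).IsPath := by
    simp [SimpleGraph.Walk.isPath_def]
    exact ⟨⟨h0.ne', h2.ne⟩, h1.ne⟩
  have huniq := (SimpleGraph.isAcyclic_iff_path_unique.mp hac)
    (SimpleGraph.Path.singleton h2) ⟨_, hpath⟩
  have := congrArg (fun p : T.Path z0 z1 => (p : T.Walk z0 z1).length) huniq
  simp [SimpleGraph.Path.singleton] at this

end auxlemmas

/-- If `∂Z` is a `K`-cut not crossing any `K`-cut of `G`, then all
edges of a congestion-`K` spanning tree `T̃` crossing `∂Z` share a common endpoint. -/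
theorem tree_edges_in_noncrossing_cut_common_endpoint {V : Type*} [Fintype V] (K : ℕ)
    (G : SimpleGraph V) (hG : KEdgeConnected G K)
    (T : SimpleGraph V) (hTle : T ≤ G) (hTtree : T.IsTree) (hTcong : CongAtMost G T K)
    (Z : Set V) (hZ : IsKCut G K Z)
    (hnc : ∀ Y : Set V, IsKCut G K Y → ¬ Crossing Z Y) :
    ∃ w : V, ∀ u v : V, T.Adj u v → s(u, v) ∈ cutEdges G Z → u = w ∨ v = w := by
  obtain ⟨hVnt, hGconn, hbound⟩ := hG
  have hTconn := hTtree.isConnected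
  have hTac := hTtree.IsAcyclic
  -- Key step: any two tree edges in the cut share an endpoint.
  have key : ∀ u v u' v' : V, T.Adj u v → s(u, v) ∈ cutEdges G Z → T.Adj u' v' →
      s(u', v') ∈ cutEdges G Z → u = u' ∨ u = v' ∨ v = u' ∨ v = v' := by
    intro u v u' v' huv hcuv hu'v' hcu'v'
    by_contra hcon
    push_neg at hcon
    obtain ⟨hne1, hne2, hne3, hne4⟩ := hcon
    obtain ⟨x, y, hxy, hmu, hmv, hnu, hnv⟩ := sep hTconn hTac huv hu'v' hne1 hne2 hne3 hne4
    have hXne : (treeSide T x s(x, y)).Nonempty := ⟨x, SimpleGraph.Reachable.refl _⟩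
    have hXnu : treeSide T x s(x, y) ≠ Set.univ := fun h => hnu (h ▸ Set.mem_univ u')
    have hcard : (cutEdges G (treeSide T x s(x, y))).ncard = K :=
      le_antisymm (hTcong x y hxy) (hbound _ hXne hXnu)
    apply hnc (treeSide T x s(x, y)) ⟨hXne, hXnu, hcard⟩
    rcases mem_cut_cases hcuv with ⟨hu, hv⟩ | ⟨hv, hu⟩ <;>
      rcases mem_cut_cases hcu'v' with ⟨hu', hv'⟩ | ⟨hv', hu'⟩
    · exact ⟨⟨u, hu, hmu⟩, ⟨u', hu', hnu⟩, ⟨v, hv, hmv⟩, ⟨v', hv', hnv⟩⟩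
    · exact ⟨⟨u, hu, hmu⟩, ⟨v', hv', hnv⟩, ⟨v, hv, hmv⟩, ⟨u', hu', hnu⟩⟩
    · exact ⟨⟨v, hv, hmv⟩, ⟨u', hu', hnu⟩, ⟨u, hu, hmu⟩, ⟨v', hv', hnv⟩⟩
    · exact ⟨⟨v, hv, hmv⟩, ⟨v', hv', hnv⟩, ⟨u, hu, hmu⟩, ⟨u', hu', hnu⟩⟩
  by_cases hex : ∃ u v : V, T.Adj u v ∧ s(u, v) ∈ cutEdges G Z
  · obtain ⟨u0, v0, h0a, h0c⟩ := hex
    by_cases hall : ∀ u v : V, T.Adj u v → s(u, v) ∈ cutEdges G Z → s(u, v) = s(u0, v0)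
    · refine ⟨u0, fun u v ha hc => ?_⟩
      have h := hall u v ha hc
      rw [Sym2.eq_iff] at h
      rcases h with ⟨rfl, rfl⟩ | ⟨rfl, rfl⟩
      · exact Or.inl rfl
      · exact Or.inr rfl
    · push_neg at hall
      obtain ⟨u1, v1, h1a, h1c, hnee⟩ := hall
      -- find the shared vertex w and the two distinct "other" endpoints
      have hsh := key u0 v0 u1 v1 h0a h0c h1a h1c
      have hnorm : ∃ w z0 z1 : V, z0 ≠ z1 ∧ T.Adj w z0 ∧ T.Adj w z1 ∧
          s(u0, v0) = s(w, z0) ∧ s(u1, v1) = s(w, z1) := by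
        rcases hsh with rfl | rfl | rfl | rfl
        · exact ⟨u0, v0, v1, fun h => hnee (by rw [h]), h0a, h1a, rfl, rfl⟩
        · refine ⟨u0, v0, u1, fun h => hnee ?_, h0a, h1a.symm, rfl, Sym2.eq_swap⟩
          rw [h, Sym2.eq_swap]
        · refine ⟨v0, u0, v1, fun h => hnee ?_, h0a.symm, h1a, Sym2.eq_swap, rfl⟩
          rw [h]; exact Sym2.eq_swap
        · refine ⟨v0, u0, u1, fun h => hnee ?_, h0a.symm, h1a.symm, Sym2.eq_swap,
            Sym2.eq_swap⟩
          rw [h]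
      obtain ⟨w, z0, z1, hz01, hwz0, hwz1, he0, he1⟩ := hnorm
      refine ⟨w, fun u v ha hc => ?_⟩
      by_contra hcon
      push_neg at hcon
      obtain ⟨huw, hvw⟩ := hcon
      have hs0 := key u v w z0 ha hc hwz0 (by rw [← he0]; exact h0c)
      have hs1 := key u v w z1 ha hc hwz1 (by rw [← he1]; exact h1c)
      have hz0' : u = z0 ∨ v = z0 := by
        rcases hs0 with h | h | h | h
        · exact absurd h huw
        · exact Or.inl h
        · exact absurd h hvw
        · exact Or.inr h
      have hz1' : u = z1 ∨ v = z1 := by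
        rcases hs1 with h | h | h | h
        · exact absurd h huw
        · exact Or.inl h
        · exact absurd h hvw
        · exact Or.inr h
      rcases hz0' with rfl | rfl <;> rcases hz1' with rfl | rfl
      · exact hz01 rfl
      · exact no_triangle hTac hwz0 hwz1 ha
      · exact no_triangle hTac hwz0 hwz1 ha.symm
      · exact hz01 rfl
  · obtain ⟨w, -, -⟩ := hVnt.exists_pair_ne
    exact ⟨w, fun u v ha hc => absurd ⟨u, v, ha, hc⟩ hex⟩
end

section
/- Let K be an even positive integer, let G be a K-edge-connected finite simple graph, and let T̃ be a spanning tree of G with congestion at most K. Let ℓ ≥ 3 and let Z_0, Z_1, ..., Z_{ℓ-1} be pairwise disjoint nonempty vertex sets whose union is V(G), with indices taken modulo ℓ, such that: each ∂Z_i is a K-cut of G that does not cross any K-cut of G; |∂Z_i ∩ ∂Z_{i+1}| = K/2 for every i; and ∂Z_i ∩ ∂Z_{i'} = ∅ whenever i and i' are not consecutive modulo ℓ. Then there is an index g and vertices w_g, w_{g+1}, ..., w_{g+ℓ-1} with w_i ∈ Z_i for i = g, ..., g+ℓ-1 (indices mod ℓ) such that: (i) for each i = g+1, ..., g+ℓ-3,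 T̃ ∩ ∂Z_i ∩ ∂Z_{i+1} consists exactly of the single edge (w_i, w_{i+1}); (ii) the edge (w_g, w_{g+1}) belongs to T̃ ∩ ∂Z_g ∩ ∂Z_{g+1} and every edge of T̃ ∩ ∂Z_g ∩ ∂Z_{g+1} is incident to w_{g+1}, and the edge (w_{g-2}, w_{g-1}) belongs to T̃ ∩ ∂Z_{g-1} ∩ ∂Z_{g-2} and every edge of T̃ ∩ ∂Z_{g-1} ∩ ∂Z_{g-2} is incident to w_{g-2}; and (iii) T̃ ∩ ∂Z_g ∩ ∂Z_{g-1} = ∅. -/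
open SimpleGraph

variable {V : Type*}

section Infra

open SimpleGraph

variable {V : Type*}

lemma mem_cutEdges_of {G : SimpleGraph V} {X : Set V} {u v : V} (h : G.Adj u v)
    (hu : u ∈ X) (hv : v ∉ X) : s(u, v) ∈ cutEdges G X :=
  ⟨G.mem_edgeSet.mpr h, u, v, rfl, hu, hv⟩

lemma mem_cutEdges_iff {G : SimpleGraph V} {X : Set V} {u v : V} (h : G.Adj u v) :
    s(u, v) ∈ cutEdges G X ↔ ((u ∈ X ∧ v ∉ X) ∨ (v ∈ X ∧ u ∉ X)) := by
  constructor
  · rintro ⟨-, a, b, hab, ha, hb⟩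
    rw [Sym2.eq_iff] at hab
    rcases hab with ⟨rfl, rfl⟩ | ⟨rfl, rfl⟩
    · exact Or.inl ⟨ha, hb⟩
    · exact Or.inr ⟨ha, hb⟩
  · rintro (⟨h1, h2⟩ | ⟨h1, h2⟩)
    · exact mem_cutEdges_of h h1 h2
    · rw [Sym2.eq_swap]; exact mem_cutEdges_of h.symm h1 h2

section Tree

variable {T : SimpleGraph V}

lemma treeSide_self (u : V) (e : Sym2 V) : u ∈ treeSide T u e := Reachable.refl u

lemma treeSide_adj {u : V} {e : Sym2 V} {x y : V} (hx : x ∈ treeSide T u e)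
    (ha : T.Adj x y) (hne : s(x, y) ≠ e) : y ∈ treeSide T u e := by
  refine Reachable.trans hx (Adj.reachable ?_)
  rw [SimpleGraph.deleteEdges_adj]
  exact ⟨ha, by simpa using hne⟩

lemma tree_not_reach (hT : T.IsTree) {x y : V} (hxy : T.Adj x y) :
    y ∉ treeSide T x s(x, y) := by
  have hb : T.IsBridge s(x, y) := (isAcyclic_iff_forall_adj_isBridge.mp hT.IsAcyclic) hxy
  rw [isBridge_iff] at hb
  intro hy
  exact hb hy

lemma treeSide_total (hT : T.IsTree) {x y : V} (hxy : T.Adj x y) (v : V) :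
    v ∈ treeSide T x s(x, y) ∨ v ∈ treeSide T y s(x, y) := by
  have key : ∀ (a c : V), T.Walk a c →
      (a ∈ treeSide T x s(x, y) ∨ a ∈ treeSide T y s(x, y)) →
      (c ∈ treeSide T x s(x, y) ∨ c ∈ treeSide T y s(x, y)) := by
    classical
    intro a c w
    induction w with
    | nil => exact id
    | @cons a b c h p ih =>
      intro ha
      apply ih
      by_cases he : s(a, b) = s(x, y)
      · rw [Sym2.eq_iff] at he
        rcases he with ⟨rfl, rfl⟩ | ⟨rfl, rfl⟩
        · exact Or.inr (treeSide_self _ _)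
        · exact Or.inl (treeSide_self _ _)
      · rcases ha with ha | ha
        · exact Or.inl (treeSide_adj ha h he)
        · exact Or.inr (treeSide_adj ha h he)
  obtain ⟨w⟩ := hT.isConnected x v
  exact key x v w (Or.inl (treeSide_self _ _))

lemma treeSide_disjoint (hT : T.IsTree) {x y : V} (hxy : T.Adj x y) {v : V}
    (h1 : v ∈ treeSide T x s(x, y)) (h2 : v ∈ treeSide T y s(x, y)) : False :=
  tree_not_reach hT hxy (h1.trans h2.symm)

lemma treeSide_compl (hT : T.IsTree) {x y : V} (hxy : T.Adj x y) {v : V} :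
    v ∉ treeSide T x s(x, y) ↔ v ∈ treeSide T y s(x, y) := by
  constructor
  · intro h
    rcases treeSide_total hT hxy v with h' | h'
    · exact absurd h' h
    · exact h'
  · intro h h'
    exact treeSide_disjoint hT hxy h' h

lemma mem_side_of_not_mem_side (hT : T.IsTree) {x y : V} (hxy : T.Adj x y) {v : V}
    (h : v ∉ treeSide T y s(x, y)) : v ∈ treeSide T x s(x, y) := by
  rcases treeSide_total hT hxy v with h' | h'
  · exact h'
  · exact absurd h' h

lemma treeSide_cross (hT : T.IsTree) {x y u v : V} (hxy : T.Adj x y)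
    (huv : s(u, v) ∈ T.edgeSet) (hu : u ∈ treeSide T x s(x, y))
    (hv : v ∉ treeSide T x s(x, y)) : s(u, v) = s(x, y) := by
  by_contra hne
  exact hv (treeSide_adj hu (T.mem_edgeSet.mp huv) hne)

lemma exists_cross_edge (hT : T.IsTree) {S : Set V} (h1 : S.Nonempty) (h2 : S ≠ Set.univ) :
    ∃ u v, s(u, v) ∈ T.edgeSet ∧ u ∈ S ∧ v ∉ S := by
  obtain ⟨u, hu⟩ := h1
  obtain ⟨v, hv⟩ : ∃ v, v ∉ S := by
    by_contra h; push_neg at h; exact h2 (Set.eq_univ_iff_forall.mpr h)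
  obtain ⟨w⟩ := hT.isConnected u v
  obtain ⟨d, _, h3, h4⟩ := w.exists_boundary_dart S hu hv
  exact ⟨d.fst, d.snd, T.mem_edgeSet.mpr d.adj, h3, h4⟩

lemma path_avoids (hT : T.IsTree) {c d x y : V} (hxy : T.Adj x y)
    (w : T.Walk c d) (hw : w.IsPath)
    (hside : c ∈ treeSide T x s(x, y) ↔ d ∈ treeSide T x s(x, y)) :
    s(x, y) ∉ w.edges := by
  classical
  have hreach : (T.deleteEdges {s(x, y)}).Reachable c d := by
    by_cases hcx : c ∈ treeSide T x s(x, y)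
    · exact Reachable.trans (Reachable.symm hcx) (hside.mp hcx)
    · have hc' := (treeSide_compl hT hxy).mp hcx
      have hd' := (treeSide_compl hT hxy).mp (fun hd => hcx (hside.mpr hd))
      exact Reachable.trans (Reachable.symm hc') hd'
  obtain ⟨p0⟩ := hreach
  have hT' : ∀ e ∈ p0.edges, e ∈ T.edgeSet := fun e he => by
    have h := p0.edges_subset_edgeSet he
    rw [SimpleGraph.edgeSet_deleteEdges] at h
    exact h.1
  have huniq := hT.existsUnique_path c d
  have hweq : w = (p0.transfer T hT').bypass :=
    huniq.unique hw (SimpleGraph.Walk.bypass_isPath _)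
  rw [hweq]
  intro hmem
  have h5 := SimpleGraph.Walk.edges_bypass_subset _ hmem
  rw [SimpleGraph.Walk.edges_transfer] at h5
  have h6 := p0.edges_subset_edgeSet h5
  rw [SimpleGraph.edgeSet_deleteEdges] at h6
  exact h6.2 rfl

end Tree

section Arc

variable {L : ℕ} [NeZero L]

lemma val_neg_one' : (-1 : ZMod L).val = L - 1 := by
  obtain ⟨m, rfl⟩ : ∃ m, L = m + 1 := ⟨L - 1, by have := Nat.pos_of_ne_zero (NeZero.ne L); omega⟩
  exact ZMod.val_neg_one m

lemma zmod_eq_neg_one_of_val {x : ZMod L} (h : x.val = L - 1) : x = -1 :=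
  ZMod.val_injective L (by rw [h, val_neg_one'])

lemma val_add_one' {x : ZMod L} (hx : x ≠ -1) : (x + 1).val = x.val + 1 := by
  have h1 : x.val < L := ZMod.val_lt x
  have h2 : x.val ≠ L - 1 := fun h => hx (zmod_eq_neg_one_of_val h)
  have h3 : x + 1 = ((x.val + 1 : ℕ) : ZMod L) := by
    push_cast [ZMod.natCast_zmod_val]
    ring
  rw [h3, ZMod.val_natCast, Nat.mod_eq_of_lt (by omega)]

/-- The cyclic arc from `a` to `c` in `ZMod L`. -/
def zarc (a c : ZMod L) : Set (ZMod L) := {j | (j - a).val ≤ (c - a).val}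

lemma zarc_left {a c : ZMod L} : a ∈ zarc a c := by simp [zarc]

lemma zarc_right {a c : ZMod L} : c ∈ zarc a c := by simp [zarc]

lemma zarc_exit {a c j : ZMod L} (h1 : j ∈ zarc a c) (h2 : j + 1 ∉ zarc a c) : j = c := by
  by_contra hne
  apply h2
  have hlt : (j - a).val < (c - a).val := by
    refine lt_of_le_of_ne h1 (fun h => hne ?_)
    have h' := ZMod.val_injective L h
    have : j - a + a = c - a + a := by rw [h']
    simpa [sub_add_cancel] using this
  by_cases hja : j - a = -1
  · exfalso
    rw [hja, val_neg_one'] at hlt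
    have := ZMod.val_lt (c - a)
    omega
  · show (j + 1 - a).val ≤ _
    have h4 : j + 1 - a = (j - a) + 1 := by ring
    rw [h4, val_add_one' hja]
    omega

lemma zarc_entry {a c j : ZMod L} (h1 : j ∉ zarc a c) (h2 : j + 1 ∈ zarc a c) : j = a - 1 := by
  by_contra hne
  have hja : j - a ≠ -1 := by
    intro h
    apply hne
    have : j - a + a = -1 + a := by rw [h]
    rw [sub_add_cancel] at this
    rw [this]; ring
  have h4 : j + 1 - a = (j - a) + 1 := by ring
  simp only [zarc, Set.mem_setOf_eq] at h1 h2
  rw [h4, val_add_one' hja] at h2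
  exact h1 (by omega)

lemma zarc_succ_right_not_mem {a c : ZMod L} (h : c ≠ a - 1) : c + 1 ∉ zarc a c := by
  have hca : c - a ≠ -1 := by
    intro h'
    apply h
    have : c - a + a = -1 + a := by rw [h']
    rw [sub_add_cancel] at this
    rw [this]; ring
  intro hmem
  have h4 : c + 1 - a = (c - a) + 1 := by ring
  rw [zarc, Set.mem_setOf_eq, h4, val_add_one' hca] at hmem
  omega

lemma zarc_self_not_mem {a j : ZMod L} (h : j ≠ a) : j ∉ zarc a (j - 1) := by
  have hja : j - 1 - a ≠ -1 := by
    intro h'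
    apply h
    have : j - 1 - a + a = -1 + a := by rw [h']
    rw [sub_add_cancel] at this
    have : j - 1 = a - 1 := by rw [this]; ring
    have := congrArg (· + 1) this
    simpa using this
  intro hmem
  have h4 : j - a = (j - 1 - a) + 1 := by ring
  rw [zarc, Set.mem_setOf_eq, h4, val_add_one' hja] at hmem
  omega

lemma not_mem_zarc_pred {b c : ZMod L} (h : c ≠ b) : b ∉ zarc (b + 1) c := by
  intro hmem
  rw [zarc, Set.mem_setOf_eq] at hmem
  have h1 : b - (b + 1) = -1 := by ring
  rw [h1, val_neg_one'] at hmem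
  have h2 : (c - (b + 1)).val < L := ZMod.val_lt _
  have h3 : (c - (b + 1)).val = L - 1 := by omega
  have h4 := zmod_eq_neg_one_of_val h3
  apply h
  have : c - (b + 1) + (b + 1) = -1 + (b + 1) := by rw [h4]
  rw [sub_add_cancel] at this
  rw [this]; ring

lemma pred_closed_univ {J : Set (ZMod L)} (h : ∀ a, a + 1 ∈ J → a ∈ J) {i : ZMod L}
    (hi : i ∈ J) (x : ZMod L) : x ∈ J := by
  have key : ∀ k : ℕ, i - (k : ZMod L) ∈ J := by
    intro k
    induction k with
    | zero => simpa using hi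
    | succ n ih =>
      apply h
      have h5 : i - ((n + 1 : ℕ) : ZMod L) + 1 = i - (n : ZMod L) := by push_cast; ring
      rw [h5]; exact ih
  have h6 := key (i - x).val
  rwa [ZMod.natCast_zmod_val, sub_sub_cancel] at h6

end Arc

end Infra

section CycSetup

open SimpleGraph

/-- The bundle of edges between consecutive blocks. -/
def Fb {V : Type*} (G : SimpleGraph V) {L : ℕ} (Z : ZMod L → Set V) (i : ZMod L) :
    Set (Sym2 V) :=
  cutEdges G (Z i) ∩ cutEdges G (Z (i + 1))

/-- Bundled hypotheses for the cactus-cycle situation. -/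
structure Cyc {V : Type*} [Fintype V] (K : ℕ) (G T : SimpleGraph V) {L : ℕ}
    (Z : ZMod L → Set V) : Prop where
  hKpos : 0 < K
  hG : KEdgeConnected G K
  hTle : T ≤ G
  hTtree : T.IsTree
  hTcong : CongAtMost G T K
  hL : 3 ≤ L
  hdisj : ∀ i j : ZMod L, i ≠ j → Disjoint (Z i) (Z j)
  hne : ∀ i : ZMod L, (Z i).Nonempty
  hunion : (⋃ i, Z i) = Set.univ
  hnc : ∀ (i : ZMod L) (Y : Set V), IsKCut G K Y → ¬ Crossing (Z i) Y
  hfar : ∀ i i' : ZMod L, i' ≠ i → i' ≠ i + 1 → i' ≠ i - 1 →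
    cutEdges G (Z i) ∩ cutEdges G (Z i') = ∅

namespace Cyc

variable {V : Type*} [Fintype V] {K : ℕ} {G T : SimpleGraph V} {L : ℕ} [NeZero L]
  {Z : ZMod L → Set V}

lemma cast_ne_zero (hc : Cyc K G T Z) {k : ℕ} (h1 : 0 < k) (h2 : k < L) :
    (k : ZMod L) ≠ 0 := by
  intro h
  rw [ZMod.natCast_eq_zero_iff] at h
  have := Nat.le_of_dvd h1 h
  omega

lemma one_ne_zero' (hc : Cyc K G T Z) : (1 : ZMod L) ≠ 0 := by
  have hL := hc.hL
  have := hc.cast_ne_zero (k := 1) one_pos (by omega)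
  simpa using this

lemma two_ne_zero' (hc : Cyc K G T Z) : (2 : ZMod L) ≠ 0 := by
  have hL := hc.hL
  have := hc.cast_ne_zero (k := 2) two_pos (by omega)
  simpa using this

lemma succ_ne (hc : Cyc K G T Z) (i : ZMod L) : i + 1 ≠ i := by
  intro h
  have : i + 1 = i + 0 := by rw [h, add_zero]
  exact hc.one_ne_zero' (by exact add_left_cancel this)

lemma succ_succ_ne (hc : Cyc K G T Z) (i : ZMod L) : i + 1 + 1 ≠ i := by
  intro h
  apply hc.two_ne_zero'
  have h2 : i + 2 = i + 0 := by rw [add_zero]; linear_combination h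
  exact add_left_cancel h2

/-- The block containing a vertex. -/
noncomputable def blockOf (hc : Cyc K G T Z) (v : V) : ZMod L :=
  (show ∃ i, v ∈ Z i from Set.mem_iUnion.mp (hc.hunion ▸ Set.mem_univ v)).choose

lemma blockOf_mem (hc : Cyc K G T Z) (v : V) : v ∈ Z (hc.blockOf v) :=
  (show ∃ i, v ∈ Z i from Set.mem_iUnion.mp (hc.hunion ▸ Set.mem_univ v)).choose_spec

lemma block_unique (hc : Cyc K G T Z) {v : V} {m n : ZMod L} (hm : v ∈ Z m) (hn : v ∈ Z n) :
    m = n := by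
  by_contra hne
  exact Set.disjoint_left.mp (hc.hdisj m n hne) hm hn

lemma blockOf_eq (hc : Cyc K G T Z) {v : V} {i : ZMod L} (h : v ∈ Z i) :
    hc.blockOf v = i :=
  hc.block_unique (hc.blockOf_mem v) h

lemma not_mem_block (hc : Cyc K G T Z) {v : V} {i j : ZMod L} (h : v ∈ Z i) (hij : i ≠ j) :
    v ∉ Z j :=
  fun h' => hij (hc.block_unique h h')

lemma mem_Fb_intro (hc : Cyc K G T Z) {i : ZMod L} {u v : V} (h : G.Adj u v)
    (hu : u ∈ Z i) (hv : v ∈ Z (i + 1)) : s(u, v) ∈ Fb G Z i := by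
  constructor
  · exact mem_cutEdges_of h hu (hc.not_mem_block hv (hc.succ_ne i))
  · exact (mem_cutEdges_iff h).mpr (Or.inr ⟨hv, hc.not_mem_block hu (fun hh => hc.succ_ne i hh.symm)⟩)

lemma mem_Fb_elim (hc : Cyc K G T Z) {i : ZMod L} {f : Sym2 V} (hf : f ∈ Fb G Z i) :
    ∃ α β, f = s(α, β) ∧ G.Adj α β ∧ α ∈ Z i ∧ β ∈ Z (i + 1) := by
  obtain ⟨hf1, hf2⟩ := hf
  obtain ⟨he, u, v, rfl, hu, hv⟩ := hf1
  have hadj : G.Adj u v := G.mem_edgeSet.mp he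
  rw [mem_cutEdges_iff hadj] at hf2
  rcases hf2 with ⟨h1, h2⟩ | ⟨h1, h2⟩
  · exact absurd (hc.block_unique hu h1) (fun hh => hc.succ_ne i hh.symm)
  · exact ⟨u, v, rfl, hadj, hu, h1⟩

lemma Fb_disjoint (hc : Cyc K G T Z) {i j : ZMod L} (hij : i ≠ j) {f : Sym2 V}
    (h1 : f ∈ Fb G Z i) (h2 : f ∈ Fb G Z j) : False := by
  obtain ⟨α, β, rfl, _, hα, hβ⟩ := hc.mem_Fb_elim h1
  obtain ⟨γ, δ, heq, _, hγ, hδ⟩ := hc.mem_Fb_elim h2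
  rw [Sym2.eq_iff] at heq
  rcases heq with ⟨rfl, rfl⟩ | ⟨rfl, rfl⟩
  · exact hij (hc.block_unique hα hγ)
  · have e1 : i = j + 1 := hc.block_unique hα hδ
    have e2 : j = i + 1 := hc.block_unique hγ hβ
    rw [e2] at e1
    exact hc.succ_succ_ne i e1.symm

lemma edge_classify (hc : Cyc K G T Z) {u v : V} (he : s(u, v) ∈ G.edgeSet) :
    hc.blockOf v = hc.blockOf u ∨ hc.blockOf v = hc.blockOf u + 1 ∨
      hc.blockOf u = hc.blockOf v + 1 := by
  by_cases h1 : hc.blockOf v = hc.blockOf u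
  · exact Or.inl h1
  by_cases h2 : hc.blockOf v = hc.blockOf u + 1
  · exact Or.inr (Or.inl h2)
  by_cases h3 : hc.blockOf v = hc.blockOf u - 1
  · refine Or.inr (Or.inr ?_)
    rw [h3]; ring
  exfalso
  have hfar := hc.hfar (hc.blockOf u) (hc.blockOf v) h1 h2 h3
  have hm : s(u, v) ∈ cutEdges G (Z (hc.blockOf u)) ∩ cutEdges G (Z (hc.blockOf v)) := by
    constructor
    · exact mem_cutEdges_of (G.mem_edgeSet.mp he) (hc.blockOf_mem u)
        (hc.not_mem_block (hc.blockOf_mem v) h1)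
    · rw [Sym2.eq_swap]
      exact mem_cutEdges_of (G.mem_edgeSet.mp he).symm (hc.blockOf_mem v)
        (hc.not_mem_block (hc.blockOf_mem u) (fun hh => h1 hh.symm))
  rw [hfar] at hm
  exact hm

/-- Orient a tree edge crossing blocks as a bundle edge. -/
lemma dart_bundle (hc : Cyc K G T Z) {u1 u2 : V} (hT : s(u1, u2) ∈ T.edgeSet)
    (hblk : hc.blockOf u1 ≠ hc.blockOf u2) :
    ∃ (n : ZMod L) (γ δ : V), s(γ, δ) = s(u1, u2) ∧ γ ∈ Z n ∧ δ ∈ Z (n + 1) := by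
  have heG : s(u1, u2) ∈ G.edgeSet := SimpleGraph.edgeSet_mono hc.hTle hT
  rcases hc.edge_classify heG with h | h | h
  · exact absurd h.symm hblk
  · exact ⟨hc.blockOf u1, u1, u2, rfl, hc.blockOf_mem u1, h ▸ hc.blockOf_mem u2⟩
  · exact ⟨hc.blockOf u2, u2, u1, Sym2.eq_swap, hc.blockOf_mem u2, h ▸ hc.blockOf_mem u1⟩

lemma side_KCut (hc : Cyc K G T Z) {x y : V} (hxy : T.Adj x y) :
    IsKCut G K (treeSide T x s(x, y)) := by
  refine ⟨⟨x, treeSide_self _ _⟩, ?_, ?_⟩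
  · rw [Set.ne_univ_iff_exists_notMem]
    exact ⟨y, tree_not_reach hc.hTtree hxy⟩
  · have h1 : (cutEdges G (treeSide T x s(x, y))).ncard ≤ K := hc.hTcong x y hxy
    have h2 : K ≤ (cutEdges G (treeSide T x s(x, y))).ncard := by
      refine hc.hG.2.2 _ ⟨x, treeSide_self _ _⟩ ?_
      rw [Set.ne_univ_iff_exists_notMem]
      exact ⟨y, tree_not_reach hc.hTtree hxy⟩
    exact le_antisymm h1 h2

lemma side_trichotomy (hc : Cyc K G T Z) {x y : V} (hxy : T.Adj x y) :
    (∃ m, treeSide T x s(x, y) ⊆ Z m) ∨ (∃ m, treeSide T y s(x, y) ⊆ Z m) ∨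
      (∀ m, Z m ⊆ treeSide T x s(x, y) ∨ Disjoint (Z m) (treeSide T x s(x, y))) := by
  by_contra hcon
  push_neg at hcon
  obtain ⟨h1, h2, h3⟩ := hcon
  obtain ⟨m, hm1, hm2⟩ := h3
  have hcompl : ∀ v, v ∉ treeSide T x s(x, y) → v ∈ treeSide T y s(x, y) :=
    fun v => (treeSide_compl hc.hTtree hxy).mp
  refine hc.hnc m (treeSide T x s(x, y)) (hc.side_KCut hxy) ?_
  refine ⟨?_, ?_, ?_, ?_⟩
  · exact Set.not_disjoint_iff_nonempty_inter.mp hm2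
  · obtain ⟨v, hv1, hv2⟩ := Set.not_subset.mp hm1
    exact ⟨v, hv1, hv2⟩
  · obtain ⟨v, hv1, hv2⟩ := Set.not_subset.mp (h1 m)
    exact ⟨v, hv2, hv1⟩
  · obtain ⟨v, hv1, hv2⟩ := Set.not_subset.mp (h2 m)
    refine ⟨v, hv2, fun hv3 => ?_⟩
    exact treeSide_disjoint hc.hTtree hxy hv3 hv1

lemma both_pendant_impossible (hc : Cyc K G T Z) {n : ZMod L} {γ δ : V}
    (hT : s(γ, δ) ∈ T.edgeSet) (hγ : γ ∈ Z n) (hδ : δ ∈ Z (n + 1))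
    (h1 : treeSide T γ s(γ, δ) ⊆ Z n) (h2 : treeSide T δ s(γ, δ) ⊆ Z (n + 1)) : False := by
  obtain ⟨v, hv⟩ := hc.hne (n + 1 + 1)
  have hadj := T.mem_edgeSet.mp hT
  rcases treeSide_total hc.hTtree hadj v with h | h
  · exact hc.not_mem_block hv (hc.succ_succ_ne n) (h1 h)
  · refine hc.not_mem_block hv ?_ (h2 h)
    intro hh
    exact hc.one_ne_zero' (add_left_cancel (show n + 1 + 1 = n + 1 + 0 by rw [hh, add_zero]))

end Cyc

end CycSetup

namespace Cyc

open SimpleGraph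

variable {V : Type*} [Fintype V] {K : ℕ} {G T : SimpleGraph V} {L : ℕ} [NeZero L]
  {Z : ZMod L → Set V}

lemma blocky_unique (hc : Cyc K G T Z) {i : ZMod L} {p q : V} (hpq : s(p, q) ∈ T.edgeSet)
    (hp : p ∈ Z i) (hq : q ∈ Z (i + 1))
    (hb : ∀ m, Z m ⊆ treeSide T p s(p, q) ∨ Disjoint (Z m) (treeSide T p s(p, q))) :
    (∀ f ∈ T.edgeSet ∩ Fb G Z i, f = s(p, q)) ∧ ∃ a, T.edgeSet ∩ Fb G Z a = ∅ := by
  have hadj := T.mem_edgeSet.mp hpq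
  have hZi : Z i ⊆ treeSide T p s(p, q) := by
    rcases hb i with h | h
    · exact h
    · exact absurd rfl (h.ne_of_mem hp (treeSide_self p _))
  have hZi1 : ∀ v ∈ Z (i + 1), v ∉ treeSide T p s(p, q) := by
    rcases hb (i + 1) with h | h
    · exact absurd (h hq) (tree_not_reach hc.hTtree hadj)
    · exact fun v hv => Set.disjoint_left.mp h hv
  constructor
  · rintro f ⟨hfT, hfF⟩
    obtain ⟨α, β, rfl, hGadj, hα, hβ⟩ := hc.mem_Fb_elim hfF
    exact treeSide_cross hc.hTtree hadj hfT (hZi hα) (hZi1 β hβ)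
  · have hex : ∃ a : ZMod L, ¬ Z a ⊆ treeSide T p s(p, q) ∧ Z (a + 1) ⊆ treeSide T p s(p, q) := by
      by_contra hno
      push_neg at hno
      have hcl : ∀ a : ZMod L, a + 1 ∈ {m | Z m ⊆ treeSide T p s(p, q)} →
          a ∈ {m | Z m ⊆ treeSide T p s(p, q)} := by
        intro a ha
        by_contra h'
        exact (hno a h') ha
      have hall := pred_closed_univ hcl (show i ∈ {m | Z m ⊆ treeSide T p s(p, q)} from hZi) (i + 1)
      obtain ⟨v, hv⟩ := hc.hne (i + 1)
      exact hZi1 v hv (hall hv)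
    obtain ⟨a, haJ, haJ1⟩ := hex
    have haD : Disjoint (Z a) (treeSide T p s(p, q)) := (hb a).resolve_left haJ
    refine ⟨a, Set.eq_empty_iff_forall_notMem.mpr ?_⟩
    rintro f ⟨hfT, hfF⟩
    obtain ⟨α, β, rfl, hGadj, hα, hβ⟩ := hc.mem_Fb_elim hfF
    have hβS : β ∈ treeSide T p s(p, q) := haJ1 hβ
    have hαS : α ∉ treeSide T p s(p, q) := Set.disjoint_left.mp haD hα
    have hcross : s(β, α) = s(p, q) :=
      treeSide_cross hc.hTtree hadj (by rw [Sym2.eq_swap]; exact hfT) hβS hαS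
    rw [Sym2.eq_iff] at hcross
    rcases hcross with ⟨h1, h2⟩ | ⟨h1, h2⟩
    · subst h1; subst h2
      have e1 : a + 1 = i := hc.block_unique hβ hp
      have e2 : a = i + 1 := hc.block_unique hα hq
      rw [e2] at e1
      exact hc.succ_succ_ne i e1
    · subst h1; subst h2
      exact hαS (treeSide_self _ _)

lemma gap_unique (hc : Cyc K G T Z) {b b' : ZMod L} (hb : T.edgeSet ∩ Fb G Z b = ∅)
    (hb' : T.edgeSet ∩ Fb G Z b' = ∅) : b = b' := by
  by_contra hne2
  have hWne : ({v : V | hc.blockOf v ∈ zarc (b + 1) b'}).Nonempty := by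
    obtain ⟨u0, hu0⟩ := hc.hne b'
    exact ⟨u0, by simp only [Set.mem_setOf_eq, hc.blockOf_eq hu0]; exact zarc_right⟩
  have hWproper : {v : V | hc.blockOf v ∈ zarc (b + 1) b'} ≠ Set.univ := by
    rw [Set.ne_univ_iff_exists_notMem]
    obtain ⟨v0, hv0⟩ := hc.hne b
    refine ⟨v0, ?_⟩
    simp only [Set.mem_setOf_eq, hc.blockOf_eq hv0]
    exact not_mem_zarc_pred (fun h => hne2 h.symm)
  obtain ⟨u, v, heT, huW, hvW⟩ := exists_cross_edge hc.hTtree hWne hWproper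
  simp only [Set.mem_setOf_eq] at huW hvW
  have heG : s(u, v) ∈ G.edgeSet := SimpleGraph.edgeSet_mono hc.hTle heT
  rcases hc.edge_classify heG with h | h | h
  · exact hvW (h ▸ huW)
  · have hexit : hc.blockOf u = b' := zarc_exit huW (fun hh => hvW (h ▸ hh))
    have hmem : s(u, v) ∈ Fb G Z (hc.blockOf u) :=
      hc.mem_Fb_intro (G.mem_edgeSet.mp heG) (hc.blockOf_mem u) (h ▸ hc.blockOf_mem v)
    rw [hexit] at hmem
    have : s(u, v) ∈ T.edgeSet ∩ Fb G Z b' := ⟨heT, hmem⟩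
    rw [hb'] at this
    exact this
  · have hentry : hc.blockOf v = b := by
      have h2 := zarc_entry hvW (h ▸ huW)
      rw [h2]; ring
    have hmem : s(v, u) ∈ Fb G Z (hc.blockOf v) :=
      hc.mem_Fb_intro (G.mem_edgeSet.mp heG).symm (hc.blockOf_mem v) (h ▸ hc.blockOf_mem u)
    rw [hentry] at hmem
    have heT' : s(v, u) ∈ T.edgeSet := by rw [Sym2.eq_swap]; exact heT
    have : s(v, u) ∈ T.edgeSet ∩ Fb G Z b := ⟨heT', hmem⟩
    rw [hb] at this
    exact this

/-- The union of all pendant sides of bundle tree edges. -/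
def AnyPend (hc : Cyc K G T Z) : Set V :=
  {x | ∃ (i : ZMod L) (α β : V), s(α, β) ∈ T.edgeSet ∧ α ∈ Z i ∧ β ∈ Z (i + 1) ∧
    ((treeSide T α s(α, β) ⊆ Z i ∧ x ∈ treeSide T α s(α, β)) ∨
      (treeSide T β s(α, β) ⊆ Z (i + 1) ∧ x ∈ treeSide T β s(α, β)))}

lemma nonpend_endpoint (hc : Cyc K G T Z) {m m' : ZMod L} {x y : V}
    (hT : s(x, y) ∈ T.edgeSet) (hx : x ∈ Z m') (hy : y ∈ Z m) (hmm : m' ≠ m)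
    (hnp : ¬ treeSide T y s(x, y) ⊆ Z m) : y ∉ hc.AnyPend := by
  rintro ⟨i, α, β, hTαβ, hα, hβ, hcase⟩
  have hadjαβ := T.mem_edgeSet.mp hTαβ
  have hadjxy := T.mem_edgeSet.mp hT
  rcases hcase with ⟨hsub, hmem⟩ | ⟨hsub, hmem⟩
  · have him : i = m := hc.block_unique (hsub hmem) hy
    by_cases heq : s(y, x) = s(α, β)
    · rw [Sym2.eq_iff] at heq
      rcases heq with ⟨h1, h2⟩ | ⟨h1, h2⟩
      · subst h1; subst h2
        apply hnp
        rw [← him, Sym2.eq_swap]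
        exact hsub
      · subst h1; subst h2
        exact tree_not_reach hc.hTtree hadjxy hmem
    · have hxZ : x ∉ Z i := him ▸ hc.not_mem_block hx hmm
      exact heq (treeSide_cross hc.hTtree hadjαβ
        (show s(y, x) ∈ T.edgeSet by rw [Sym2.eq_swap]; exact hT)
        hmem (fun hh => hxZ (hsub hh)))
  · have him : i + 1 = m := hc.block_unique (hsub hmem) hy
    by_cases heq : s(y, x) = s(β, α)
    · rw [Sym2.eq_iff] at heq
      rcases heq with ⟨h1, h2⟩ | ⟨h1, h2⟩
      · subst h1; subst h2
        apply hnp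
        rw [← him]
        exact hsub
      · subst h1; subst h2
        rw [Sym2.eq_swap] at hmem
        exact tree_not_reach hc.hTtree hadjxy hmem
    · have hxZ : x ∉ Z (i + 1) := him ▸ hc.not_mem_block hx hmm
      have hmem' : y ∈ treeSide T β s(β, α) := by rw [Sym2.eq_swap]; exact hmem
      refine heq (treeSide_cross hc.hTtree hadjαβ.symm
        (show s(y, x) ∈ T.edgeSet by rw [Sym2.eq_swap]; exact hT) hmem' ?_)
      intro hh
      rw [Sym2.eq_swap] at hh
      exact hxZ (hsub hh)

lemma bundle_edge_cases (hc : Cyc K G T Z) {n : ZMod L} {γ δ : V}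
    (hT : s(γ, δ) ∈ T.edgeSet) (hγ : γ ∈ Z n) (hδ : δ ∈ Z (n + 1)) :
    (treeSide T γ s(γ, δ) ⊆ Z n ∧ δ ∉ hc.AnyPend ∧ treeSide T γ s(γ, δ) ⊆ hc.AnyPend) ∨
    (treeSide T δ s(γ, δ) ⊆ Z (n + 1) ∧ γ ∉ hc.AnyPend ∧ treeSide T δ s(γ, δ) ⊆ hc.AnyPend) ∨
    ((∀ f ∈ T.edgeSet ∩ Fb G Z n, f = s(γ, δ)) ∧ (∃ a, T.edgeSet ∩ Fb G Z a = ∅) ∧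
      (∀ m, Z m ⊆ treeSide T γ s(γ, δ) ∨ Disjoint (Z m) (treeSide T γ s(γ, δ)))) := by
  have hadj := T.mem_edgeSet.mp hT
  rcases hc.side_trichotomy hadj with ⟨m, hm⟩ | ⟨m, hm⟩ | hb
  · have hmn : m = n := hc.block_unique (hm (treeSide_self _ _)) hγ
    subst hmn
    left
    refine ⟨hm, ?_, fun v hv => ⟨m, γ, δ, hT, hγ, hδ, Or.inl ⟨hm, hv⟩⟩⟩
    exact hc.nonpend_endpoint hT hγ hδ (fun h => hc.succ_ne m h.symm)
      (fun hcon => hc.both_pendant_impossible hT hγ hδ hm hcon)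
  · have hmn : m = n + 1 := hc.block_unique (hm (treeSide_self _ _)) hδ
    subst hmn
    right; left
    refine ⟨hm, ?_, fun v hv => ⟨n, γ, δ, hT, hγ, hδ, Or.inr ⟨hm, hv⟩⟩⟩
    have h1 : s(δ, γ) ∈ T.edgeSet := by rw [Sym2.eq_swap]; exact hT
    refine hc.nonpend_endpoint h1 hδ hγ (hc.succ_ne n) ?_
    intro hcon
    refine hc.both_pendant_impossible hT hγ hδ ?_ hm
    rw [Sym2.eq_swap]
    exact hcon
  · exact Or.inr (Or.inr ⟨(hc.blocky_unique hT hγ hδ hb).1, (hc.blocky_unique hT hγ hδ hb).2, hb⟩)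

end Cyc

namespace Cyc

open SimpleGraph

variable {V : Type*} [Fintype V] {K : ℕ} {G T : SimpleGraph V} {L : ℕ} [NeZero L]
  {Z : ZMod L → Set V}

lemma shared_endpoint (hc : Cyc K G T Z) {m : ZMod L} {x y x' y' : V}
    (hf : s(x, y) ∈ T.edgeSet) (hf' : s(x', y') ∈ T.edgeSet)
    (hy : y ∈ Z m) (hy' : y' ∈ Z m) (hx : x ∉ Z m) (hx' : x' ∉ Z m)
    (hyp : y ∉ hc.AnyPend) (hyp' : y' ∉ hc.AnyPend) : y = y' := by
  classical
  by_contra hne2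
  obtain ⟨w0⟩ := hc.hTtree.isConnected y y'
  have hmain : ∀ (p : T.Walk y y'), p.IsPath → False := by
    intro p hp
    have havoid : ∀ γ δ : V, s(γ, δ) ∈ T.edgeSet → hc.blockOf γ ≠ hc.blockOf δ →
        s(γ, δ) ∉ p.edges := by
      intro γ δ hTe hblk
      obtain ⟨n, γ', δ', heq, hγ', hδ'⟩ := hc.dart_bundle hTe hblk
      rw [← heq]
      have hTe' : s(γ', δ') ∈ T.edgeSet := by rw [heq]; exact hTe
      have hadj := T.mem_edgeSet.mp hTe'
      refine path_avoids hc.hTtree hadj p hp ?_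
      rcases hc.bundle_edge_cases hTe' hγ' hδ' with ⟨hsub, -, hAP⟩ | ⟨hsub, -, hAP⟩ | ⟨-, -, hb⟩
      · exact iff_of_false (fun hh => hyp (hAP hh)) (fun hh => hyp' (hAP hh))
      · exact iff_of_true
          (mem_side_of_not_mem_side hc.hTtree hadj (fun hh => hyp (hAP hh)))
          (mem_side_of_not_mem_side hc.hTtree hadj (fun hh => hyp' (hAP hh)))
      · rcases hb m with h | h
        · exact iff_of_true (h hy) (h hy')
        · exact iff_of_false (Set.disjoint_left.mp h hy) (Set.disjoint_left.mp h hy')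
    have hsupp : ∀ z ∈ p.support, z ∈ Z m := by
      intro z hz
      by_contra hzm
      obtain ⟨d, hd, h1, h2⟩ := (p.takeUntil z hz).exists_boundary_dart (Z m) hy hzm
      have hdT : s(d.fst, d.snd) ∈ T.edgeSet := T.mem_edgeSet.mpr d.adj
      have hblk : hc.blockOf d.fst ≠ hc.blockOf d.snd := by
        intro hh
        apply h2
        have h3 := hc.blockOf_mem d.snd
        rwa [← hh, hc.blockOf_eq h1] at h3
      have hmem : s(d.fst, d.snd) ∈ p.edges :=
        Walk.edges_takeUntil_subset p hz (List.mem_map_of_mem (f := Dart.edge) hd)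
      exact havoid _ _ hdT hblk hmem
    cases p with
    | nil => exact hne2 rfl
    | @cons _ z₁ _ hadj1 rest =>
      have hz₁m : z₁ ∈ Z m := hsupp z₁ (by
        rw [Walk.support_cons]
        exact List.mem_cons_of_mem _ rest.start_mem_support)
      have hTe1 : s(y, z₁) ∈ T.edgeSet := T.mem_edgeSet.mpr hadj1
      have hyz : y ≠ z₁ := hadj1.ne
      have hxz1 : x ≠ z₁ := fun h => hx (h ▸ hz₁m)
      have hxside : x ∈ treeSide T y s(y, z₁) := by
        refine treeSide_adj (treeSide_self _ _) ((T.mem_edgeSet.mp hf).symm) ?_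
        intro hh
        rw [Sym2.eq_iff] at hh
        rcases hh with ⟨-, h2⟩ | ⟨h1, -⟩
        · exact hxz1 h2
        · exact hyz h1
      rcases hc.side_trichotomy hadj1 with ⟨n, hn⟩ | ⟨n, hn⟩ | hb
      · have hnm : n = m := hc.block_unique (hn (treeSide_self _ _)) hy
        exact hx (hnm ▸ hn hxside)
      · have hnm : n = m := hc.block_unique (hn (treeSide_self _ _)) hz₁m
        subst hnm
        have hnotin : s(y, z₁) ∉ rest.edges := by
          intro hee
          have hysupp := rest.fst_mem_support_of_mem_edges hee
          rw [Walk.cons_isPath_iff] at hp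
          exact hp.2 hysupp
        have hy'side : y' ∈ treeSide T z₁ s(y, z₁) :=
          ⟨rest.toDeleteEdges {s(y, z₁)}
            (fun e he hee => hnotin (Set.mem_singleton_iff.mp hee ▸ he))⟩
        have hx'P : x' ∉ treeSide T z₁ s(y, z₁) := fun hh => hx' (hn hh)
        have hcross := treeSide_cross hc.hTtree hadj1.symm
          (show s(y', x') ∈ T.edgeSet by rw [Sym2.eq_swap]; exact hf')
          (show y' ∈ treeSide T z₁ s(z₁, y) by rw [Sym2.eq_swap]; exact hy'side)
          (show x' ∉ treeSide T z₁ s(z₁, y) by rw [Sym2.eq_swap]; exact hx'P)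
        rw [Sym2.eq_iff] at hcross
        rcases hcross with ⟨-, h2⟩ | ⟨-, h2⟩
        · exact hx' (by rw [h2]; exact hy)
        · exact hx' (by rw [h2]; exact hz₁m)
      · rcases hb m with h | h
        · exact treeSide_disjoint hc.hTtree hadj1 (h hz₁m) (treeSide_self _ _)
        · exact Set.disjoint_left.mp h hy (treeSide_self _ _)
  exact hmain w0.bypass w0.bypass_isPath

end Cyc

namespace Cyc

open SimpleGraph

variable {V : Type*} [Fintype V] {K : ℕ} {G T : SimpleGraph V} {L : ℕ} [NeZero L]
  {Z : ZMod L → Set V}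

lemma gap_exists (hc : Cyc K G T Z) : ∃ b, T.edgeSet ∩ Fb G Z b = ∅ := by
  classical
  by_contra hno
  push_neg at hno
  have hney : ∀ b : ZMod L, (T.edgeSet ∩ Fb G Z b).Nonempty := hno
  have hpend : ∀ (i : ZMod L) (γ δ : V), s(γ, δ) ∈ T.edgeSet → γ ∈ Z i → δ ∈ Z (i + 1) →
      ∃ yy, yy ∉ hc.AnyPend ∧ (yy ∈ Z i ∨ yy ∈ Z (i + 1)) := by
    intro i γ δ hT hγ hδ
    rcases hc.bundle_edge_cases hT hγ hδ with ⟨-, hnp, -⟩ | ⟨-, hnp, -⟩ | ⟨-, ⟨a, hgap⟩, -⟩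
    · exact ⟨δ, hnp, Or.inr hδ⟩
    · exact ⟨γ, hnp, Or.inl hγ⟩
    · exact absurd hgap (hno a).ne_empty
  have hsame : ∀ u v : V, u ∉ hc.AnyPend → v ∉ hc.AnyPend → hc.blockOf u = hc.blockOf v := by
    intro u v hu hv
    by_contra hneq
    obtain ⟨w0⟩ := hc.hTtree.isConnected u v
    have hp : w0.bypass.IsPath := w0.bypass_isPath
    obtain ⟨d, hd, h1, h2⟩ := w0.bypass.exists_boundary_dart (Z (hc.blockOf u))
      (hc.blockOf_mem u) (hc.not_mem_block (hc.blockOf_mem v) (fun hh => hneq hh.symm))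
    have hdT : s(d.fst, d.snd) ∈ T.edgeSet := T.mem_edgeSet.mpr d.adj
    have hblk : hc.blockOf d.fst ≠ hc.blockOf d.snd := by
      intro hh
      apply h2
      have h3 := hc.blockOf_mem d.snd
      rwa [← hh, hc.blockOf_eq h1] at h3
    obtain ⟨n, γ', δ', heq, hγ', hδ'⟩ := hc.dart_bundle hdT hblk
    have hTe' : s(γ', δ') ∈ T.edgeSet := by rw [heq]; exact hdT
    have hadj := T.mem_edgeSet.mp hTe'
    have hmem : s(γ', δ') ∈ w0.bypass.edges := by
      rw [heq]; exact List.mem_map_of_mem (f := Dart.edge) hd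
    refine (path_avoids hc.hTtree hadj w0.bypass hp ?_) hmem
    rcases hc.bundle_edge_cases hTe' hγ' hδ' with ⟨hsub, -, hAP⟩ | ⟨hsub, -, hAP⟩ | ⟨-, ⟨a, hgap⟩, -⟩
    · exact iff_of_false (fun hh => hu (hAP hh)) (fun hh => hv (hAP hh))
    · exact iff_of_true
        (mem_side_of_not_mem_side hc.hTtree hadj (fun hh => hu (hAP hh)))
        (mem_side_of_not_mem_side hc.hTtree hadj (fun hh => hv (hAP hh)))
    · exact absurd hgap (hno a).ne_empty
  obtain ⟨f0, hf0T, hf0F⟩ := hney 0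
  obtain ⟨γ0, δ0, rfl, -, hγ0, hδ0⟩ := hc.mem_Fb_elim hf0F
  obtain ⟨y0, hy0, -⟩ := hpend 0 γ0 δ0 hf0T hγ0 hδ0
  obtain ⟨f1, hf1T, hf1F⟩ := hney (hc.blockOf y0 + 1)
  obtain ⟨γ1, δ1, rfl, -, hγ1, hδ1⟩ := hc.mem_Fb_elim hf1F
  obtain ⟨y1, hy1, hy1b⟩ := hpend (hc.blockOf y0 + 1) γ1 δ1 hf1T hγ1 hδ1
  have hbb := hsame y1 y0 hy1 hy0
  rcases hy1b with h | h
  · rw [hc.blockOf_eq h] at hbb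
    exact hc.succ_ne (hc.blockOf y0) hbb
  · rw [hc.blockOf_eq h] at hbb
    exact hc.succ_succ_ne (hc.blockOf y0) hbb

lemma typeB_at_gap_succ (hc : Cyc K G T Z) {b : ZMod L}
    (hgap : T.edgeSet ∩ Fb G Z b = ∅)
    {j : ZMod L} {p₁ q₁ : V} (hT1 : s(p₁, q₁) ∈ T.edgeSet)
    (hp₁ : p₁ ∈ Z j) (hq₁ : q₁ ∈ Z (j + 1))
    (hpend : treeSide T p₁ s(p₁, q₁) ⊆ Z j) : j = b + 1 := by
  classical
  by_contra hjb1
  have hadj1 := T.mem_edgeSet.mp hT1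
  have hjb : j ≠ b := by
    intro h
    have hm : s(p₁, q₁) ∈ T.edgeSet ∩ Fb G Z b :=
      ⟨hT1, by rw [← h]; exact hc.mem_Fb_intro (hc.hTle hadj1) hp₁ hq₁⟩
    rw [hgap] at hm
    exact hm
  -- no blocky edges in bundle j
  have hnoblocky : ∀ (γ δ : V), s(γ, δ) ∈ T.edgeSet → γ ∈ Z j → δ ∈ Z (j + 1) →
      (∀ m, Z m ⊆ treeSide T γ s(γ, δ) ∨ Disjoint (Z m) (treeSide T γ s(γ, δ))) → False := by
    intro γ δ hTe hγ hδ hb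
    have huni := (hc.blocky_unique hTe hγ hδ hb).1
    have he1 : s(p₁, q₁) = s(γ, δ) :=
      huni _ ⟨hT1, hc.mem_Fb_intro (hc.hTle hadj1) hp₁ hq₁⟩
    rw [Sym2.eq_iff] at he1
    rcases he1 with ⟨h1, h2⟩ | ⟨h1, h2⟩
    swap
    · exact hc.not_mem_block hp₁ (fun hh => hc.succ_ne j hh.symm) (by rw [h1]; exact hδ)
    · subst h1; subst h2
      have hZj : Z j ⊆ treeSide T p₁ s(p₁, q₁) := by
        rcases hb j with h | h
        · exact h
        · exact absurd rfl (h.ne_of_mem hp₁ (treeSide_self _ _))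
      have hgap2 : T.edgeSet ∩ Fb G Z (j - 1) = ∅ := by
        rw [Set.eq_empty_iff_forall_notMem]
        rintro f ⟨hfT, hfF⟩
        obtain ⟨α, β, rfl, -, hα, hβ⟩ := hc.mem_Fb_elim hfF
        have hβ' : β ∈ Z j := by rwa [sub_add_cancel] at hβ
        have hαn : α ∉ treeSide T p₁ s(p₁, q₁) := by
          intro hh
          have e := hc.block_unique hα (hpend hh)
          exact hc.one_ne_zero' (by linear_combination -e)
        have hcross := treeSide_cross hc.hTtree hadj1
          (show s(β, α) ∈ T.edgeSet by rw [Sym2.eq_swap]; exact hfT) (hZj hβ') hαn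
        rw [Sym2.eq_iff] at hcross
        rcases hcross with ⟨h1, h2⟩ | ⟨h1, h2⟩
        · have e := hc.block_unique (by rw [h2] at hα; exact hα) hq₁
          exact hc.two_ne_zero' (by linear_combination -e)
        · have e := hc.block_unique (by rw [h1] at hβ'; exact hβ') hq₁
          exact hc.one_ne_zero' (by linear_combination -e)
      have he2 := hc.gap_unique hgap2 hgap
      exact hjb1 (by rw [← he2]; ring)
  -- q₁ is not in any pendant
  have hq₁AP : q₁ ∉ hc.AnyPend := by
    rcases hc.bundle_edge_cases hT1 hp₁ hq₁ with ⟨-, hnp, -⟩ | ⟨hsub, -, -⟩ | ⟨-, -, hb⟩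
    · exact hnp
    · exact absurd (hc.both_pendant_impossible hT1 hp₁ hq₁ hpend hsub) (fun h => h)
    · exact absurd (hnoblocky _ _ hT1 hp₁ hq₁ hb) (fun h => h)
  -- the set Y
  have hjarc : j ∉ zarc (b + 1) (j - 1) := zarc_self_not_mem hjb1
  have hPBsub : ∀ v : V, (∃ pp qq : V, s(pp, qq) ∈ T.edgeSet ∧ pp ∈ Z j ∧ qq ∈ Z (j + 1) ∧
      treeSide T pp s(pp, qq) ⊆ Z j ∧ v ∈ treeSide T pp s(pp, qq)) → v ∈ Z j := by
    rintro v ⟨pp, qq, -, -, -, hs, hv⟩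
    exact hs hv
  set PB : Set V := {v | ∃ pp qq : V, s(pp, qq) ∈ T.edgeSet ∧ pp ∈ Z j ∧ qq ∈ Z (j + 1) ∧
    treeSide T pp s(pp, qq) ⊆ Z j ∧ v ∈ treeSide T pp s(pp, qq)} with hPBdef
  have hp₁PB : p₁ ∈ PB := ⟨p₁, q₁, hT1, hp₁, hq₁, hpend, treeSide_self _ _⟩
  set Y : Set V := {v | hc.blockOf v ∈ zarc (b + 1) (j - 1) ∨ (hc.blockOf v = j ∧ v ∉ PB)}
    with hYdef
  have hp₁Y : p₁ ∉ Y := by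
    intro hh
    rcases hh with h | ⟨-, h⟩
    · rw [hc.blockOf_eq hp₁] at h
      exact hjarc h
    · exact h hp₁PB
  have hYne : Y.Nonempty := by
    obtain ⟨v0, hv0⟩ := hc.hne (j - 1)
    exact ⟨v0, Or.inl (by rw [hc.blockOf_eq hv0]; exact zarc_right)⟩
  obtain ⟨u, v, heT, huY, hvY⟩ := exists_cross_edge hc.hTtree hYne
    (by rw [Set.ne_univ_iff_exists_notMem]; exact ⟨p₁, hp₁Y⟩)
  have heG : s(u, v) ∈ G.edgeSet := SimpleGraph.edgeSet_mono hc.hTle heT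
  simp only [hYdef, Set.mem_setOf_eq, not_or, not_and_or, not_not] at hvY
  obtain ⟨hv1, hv2⟩ := hvY
  -- produce a type-C edge with Z j endpoint outside PB and AnyPend
  have hstar : ∃ u₀ : V, u₀ ∈ Z j ∧ u₀ ∉ hc.AnyPend := by
    rcases huY with hu1 | ⟨hu1, hu2⟩
    · rcases hc.edge_classify heG with h | h | h
      · exact absurd (h ▸ hu1) hv1
      · have hexit : hc.blockOf u = j - 1 := zarc_exit hu1 (fun hh => hv1 (h ▸ hh))
        have hvZ : hc.blockOf v = j := by rw [h, hexit]; ring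
        have hvPB : v ∈ PB := by
          rcases hv2 with h' | h'
          · exact absurd hvZ h'
          · exact h'
        obtain ⟨pp, qq, hTpq, hpp, hqq, hsubp, hvmem⟩ := hvPB
        have huZ1 : u ∈ Z (j - 1) := by rw [← hexit]; exact hc.blockOf_mem u
        have huns : u ∉ treeSide T pp s(pp, qq) := by
          intro hh
          have e : j - 1 = j := hc.block_unique huZ1 (hsubp hh)
          exact hc.one_ne_zero' (by linear_combination -e)
        have hcross := treeSide_cross hc.hTtree (T.mem_edgeSet.mp hTpq)
          (show s(v, u) ∈ T.edgeSet by rw [Sym2.eq_swap]; exact heT) hvmem huns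
        rw [Sym2.eq_iff] at hcross
        exfalso
        rcases hcross with ⟨-, h2⟩ | ⟨h1, -⟩
        · have huZ2 : u ∈ Z (j + 1) := by rw [h2]; exact hqq
          have e : j - 1 = j + 1 := hc.block_unique huZ1 huZ2
          exact hc.two_ne_zero' (by linear_combination -e)
        · have hvZ2 : v ∈ Z (j + 1) := by rw [← h1] at hqq; exact hqq
          have e : j = j + 1 := hc.block_unique (hsubp hvmem) hvZ2
          exact hc.one_ne_zero' (by linear_combination -e)
      · have hentry : hc.blockOf v = b := by
          have h5 := zarc_entry hv1 (h ▸ hu1)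
          rw [h5]; ring
        have hmem : s(v, u) ∈ Fb G Z b := by
          rw [← hentry]
          exact hc.mem_Fb_intro (G.mem_edgeSet.mp heG).symm (hc.blockOf_mem v)
            (h ▸ hc.blockOf_mem u)
        have hm : s(v, u) ∈ T.edgeSet ∩ Fb G Z b :=
          ⟨by rw [Sym2.eq_swap]; exact heT, hmem⟩
        rw [hgap] at hm
        exact hm.elim
    · -- u in Z j outside PB
      rcases hc.edge_classify heG with h | h | h
      · -- v also in block j : v ∈ PB, contradiction via crossing
        have hvZ : hc.blockOf v = j := h ▸ hu1
        have hvPB : v ∈ PB := by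
          rcases hv2 with h' | h'
          · exact absurd hvZ h'
          · exact h'
        obtain ⟨pp, qq, hTpq, hpp, hqq, hsubp, hvmem⟩ := hvPB
        have huns : u ∉ treeSide T pp s(pp, qq) := by
          intro hh
          exact hu2 ⟨pp, qq, hTpq, hpp, hqq, hsubp, hh⟩
        have hcross := treeSide_cross hc.hTtree (T.mem_edgeSet.mp hTpq)
          (show s(v, u) ∈ T.edgeSet by rw [Sym2.eq_swap]; exact heT) hvmem huns
        rw [Sym2.eq_iff] at hcross
        exfalso
        have huZ1 : u ∈ Z j := by rw [← hu1]; exact hc.blockOf_mem u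
        rcases hcross with ⟨-, h2⟩ | ⟨h1, -⟩
        · have huZ2 : u ∈ Z (j + 1) := by rw [h2]; exact hqq
          have e : j = j + 1 := hc.block_unique huZ1 huZ2
          exact hc.one_ne_zero' (by linear_combination -e)
        · have hvZ2 : v ∈ Z (j + 1) := by rw [← h1] at hqq; exact hqq
          have e : j = j + 1 := hc.block_unique (hsubp hvmem) hvZ2
          exact hc.one_ne_zero' (by linear_combination -e)
      · -- v in block j+1 : a bundle-j tree edge from u
        have huZ : u ∈ Z j := by rw [← hu1]; exact hc.blockOf_mem u
        have hvZ : v ∈ Z (j + 1) := by rw [← hu1, ← h]; exact hc.blockOf_mem v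
        rcases hc.bundle_edge_cases heT huZ hvZ with ⟨hsub, -, -⟩ | ⟨-, hnp, -⟩ | ⟨-, -, hb⟩
        · exact absurd (⟨u, v, heT, huZ, hvZ, hsub, treeSide_self _ _⟩ : u ∈ PB) hu2
        · exact ⟨u, huZ, hnp⟩
        · exact absurd (hnoblocky _ _ heT huZ hvZ hb) (fun hh => hh)
      · have hvZ : hc.blockOf v = j - 1 := by
          have : hc.blockOf v + 1 = j := by rw [← h, hu1]
          rw [← this]; ring
        exact absurd (by rw [hvZ]; exact zarc_right) hv1
  obtain ⟨u₀, hu₀Z, hu₀AP⟩ := hstar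
  -- final path argument from u₀ to q₁
  obtain ⟨w0⟩ := hc.hTtree.isConnected u₀ q₁
  have hfinal : ∀ (p : T.Walk u₀ q₁), p.IsPath → False := by
    intro p hp
    have hq₁W : hc.blockOf q₁ ∉ zarc (b + 1) j := by
      rw [hc.blockOf_eq hq₁]
      exact zarc_succ_right_not_mem (by
        intro hh
        exact hjb (by rw [hh]; ring))
    obtain ⟨d, hd, h1, h2⟩ := p.exists_boundary_dart {v | hc.blockOf v ∈ zarc (b + 1) j}
      (by simp only [Set.mem_setOf_eq]; rw [hc.blockOf_eq hu₀Z]; exact zarc_right) hq₁W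
    simp only [Set.mem_setOf_eq] at h1 h2
    have hdT : s(d.fst, d.snd) ∈ T.edgeSet := T.mem_edgeSet.mpr d.adj
    have hdG : s(d.fst, d.snd) ∈ G.edgeSet := SimpleGraph.edgeSet_mono hc.hTle hdT
    have hmem : s(d.fst, d.snd) ∈ p.edges := List.mem_map_of_mem (f := Dart.edge) hd
    rcases hc.edge_classify hdG with h | h | h
    · exact h2 (h ▸ h1)
    · have hexit : hc.blockOf d.fst = j := zarc_exit h1 (fun hh => h2 (h ▸ hh))
      have hfZ : d.fst ∈ Z j := by rw [← hexit]; exact hc.blockOf_mem d.fst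
      have hsZ : d.snd ∈ Z (j + 1) := by rw [← hexit, ← h]; exact hc.blockOf_mem d.snd
      have hadj := T.mem_edgeSet.mp hdT
      refine (path_avoids hc.hTtree hadj p hp ?_) hmem
      rcases hc.bundle_edge_cases hdT hfZ hsZ with ⟨-, -, hAP⟩ | ⟨-, -, hAP⟩ | ⟨-, -, hb⟩
      · exact iff_of_false (fun hh => hu₀AP (hAP hh)) (fun hh => hq₁AP (hAP hh))
      · exact iff_of_true
          (mem_side_of_not_mem_side hc.hTtree hadj (fun hh => hu₀AP (hAP hh)))
          (mem_side_of_not_mem_side hc.hTtree hadj (fun hh => hq₁AP (hAP hh)))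
      · exact absurd (hnoblocky _ _ hdT hfZ hsZ hb) (fun hh => hh)
    · have hentry : hc.blockOf d.snd = b := by
        have h5 := zarc_entry h2 (h ▸ h1)
        rw [h5]; ring
      have hmemb : s(d.snd, d.fst) ∈ Fb G Z b := by
        rw [← hentry]
        exact hc.mem_Fb_intro (G.mem_edgeSet.mp hdG).symm (hc.blockOf_mem d.snd)
          (h ▸ hc.blockOf_mem d.fst)
      have hm : s(d.snd, d.fst) ∈ T.edgeSet ∩ Fb G Z b :=
        ⟨by rw [Sym2.eq_swap]; exact hdT, hmemb⟩
      rw [hgap] at hm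
      exact hm.elim
  exact hfinal w0.bypass w0.bypass_isPath

end Cyc

namespace Cyc

open SimpleGraph

variable {V : Type*} [Fintype V] {K : ℕ} {G T : SimpleGraph V} {L : ℕ} [NeZero L]
  {Z : ZMod L → Set V}

lemma reflect (hc : Cyc K G T Z) : Cyc K G T (fun i : ZMod L => Z (-i)) := by
  refine ⟨hc.hKpos, hc.hG, hc.hTle, hc.hTtree, hc.hTcong, hc.hL, ?_, fun i => hc.hne _,
    ?_, fun i Y hY => hc.hnc _ Y hY, ?_⟩
  · intro i j hij
    exact hc.hdisj _ _ (fun h => hij (neg_injective h))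
  · rw [Set.eq_univ_iff_forall]
    intro v
    obtain ⟨i, hi⟩ := Set.mem_iUnion.mp (hc.hunion ▸ Set.mem_univ v)
    exact Set.mem_iUnion.mpr ⟨-i, by simpa using hi⟩
  · intro i i' h1 h2 h3
    refine hc.hfar (-i) (-i') (fun h => h1 (neg_injective h)) ?_ ?_
    · intro h
      apply h3
      have h4 : i' = -(-i + 1) := by rw [← h]; ring
      rw [h4]; ring
    · intro h
      apply h2
      have h4 : i' = -(-i - 1) := by rw [← h]; ring
      rw [h4]; ring

lemma Fb_reflect (G : SimpleGraph V) (Z : ZMod L → Set V) (i : ZMod L) :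
    Fb G (fun k : ZMod L => Z (-k)) i = Fb G Z (-i - 1) := by
  have e1 : -(i + 1) = -i - 1 := by ring
  have e2 : -i - 1 + 1 = -i := by ring
  show cutEdges G (Z (-i)) ∩ cutEdges G (Z (-(i + 1))) =
    cutEdges G (Z (-i - 1)) ∩ cutEdges G (Z (-i - 1 + 1))
  rw [e1, e2, Set.inter_comm]

lemma typeC_at_gap_pred (hc : Cyc K G T Z) {b : ZMod L}
    (hgap : T.edgeSet ∩ Fb G Z b = ∅)
    {j : ZMod L} {p₁ q₁ : V} (hT1 : s(p₁, q₁) ∈ T.edgeSet)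
    (hp₁ : p₁ ∈ Z j) (hq₁ : q₁ ∈ Z (j + 1))
    (hpend : treeSide T q₁ s(p₁, q₁) ⊆ Z (j + 1)) : j = b - 1 := by
  have hc' := hc.reflect
  have hgap' : T.edgeSet ∩ Fb G (fun k : ZMod L => Z (-k)) (-b - 1) = ∅ := by
    rw [Fb_reflect]
    have e : -(-b - 1) - 1 = b := by ring
    rw [e]
    exact hgap
  have h1 : q₁ ∈ (fun k : ZMod L => Z (-k)) (-(j + 1)) := by simpa using hq₁
  have h2 : p₁ ∈ (fun k : ZMod L => Z (-k)) (-(j + 1) + 1) := by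
    show p₁ ∈ Z (-(-(j + 1) + 1))
    have e : -(-(j + 1) + 1) = j := by ring
    rw [e]; exact hp₁
  have h3 : treeSide T q₁ s(q₁, p₁) ⊆ (fun k : ZMod L => Z (-k)) (-(j + 1)) := by
    show treeSide T q₁ s(q₁, p₁) ⊆ Z (- -(j + 1))
    rw [neg_neg, Sym2.eq_swap]
    exact hpend
  have hT1' : s(q₁, p₁) ∈ T.edgeSet := by rw [Sym2.eq_swap]; exact hT1
  have h6 := hc'.typeB_at_gap_succ hgap' hT1' h1 h2 h3
  linear_combination -h6

end Cyc

namespace Cyc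

open SimpleGraph

variable {V : Type*} [Fintype V] {K : ℕ} {G T : SimpleGraph V} {L : ℕ} [NeZero L]
  {Z : ZMod L → Set V}

lemma endpoint_data (hc : Cyc K G T Z) {b : ZMod L} (hgap : T.edgeSet ∩ Fb G Z b = ∅)
    {m : ZMod L} (hmb : m ≠ b) (hmb1 : m ≠ b + 1) :
    ∀ f ∈ T.edgeSet ∩ Fb G Z (m - 1),
      ∃ xx yy, f = s(xx, yy) ∧ xx ∈ Z (m - 1) ∧ yy ∈ Z m ∧ yy ∉ hc.AnyPend := by
  intro f hf
  obtain ⟨α, β, rfl, hGadj, hα, hβ⟩ := hc.mem_Fb_elim hf.2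
  have hβ' : β ∈ Z m := by rwa [sub_add_cancel] at hβ
  refine ⟨α, β, rfl, hα, hβ', hc.nonpend_endpoint hf.1 hα hβ' ?_ ?_⟩
  · intro hcon
    exact hc.one_ne_zero' (by linear_combination -hcon)
  · intro hcon
    have h5 := hc.typeC_at_gap_pred hgap hf.1 hα hβ (by rw [sub_add_cancel]; exact hcon)
    exact hmb (by linear_combination h5)

lemma center_exists (hc : Cyc K G T Z) {b : ZMod L} (hgap : T.edgeSet ∩ Fb G Z b = ∅)
    (huniq : ∀ j : ZMod L, j ≠ b → (T.edgeSet ∩ Fb G Z j).Nonempty)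
    {m : ZMod L} (hmb : m ≠ b) (hmb1 : m ≠ b + 1) :
    ∃ w, w ∈ Z m ∧ w ∉ hc.AnyPend ∧ ∀ f ∈ T.edgeSet ∩ Fb G Z (m - 1), w ∈ f := by
  obtain ⟨f0, hf0⟩ := huniq (m - 1) (fun h => hmb1 (by linear_combination h))
  obtain ⟨x0, y0, hfeq, hx0, hy0, hy0AP⟩ := hc.endpoint_data hgap hmb hmb1 f0 hf0
  refine ⟨y0, hy0, hy0AP, ?_⟩
  intro f hf
  obtain ⟨x1, y1, hfeq1, hx1, hy1, hy1AP⟩ := hc.endpoint_data hgap hmb hmb1 f hf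
  have hm1m : ∀ xx : V, xx ∈ Z (m - 1) → xx ∉ Z m := by
    intro xx hxx
    exact hc.not_mem_block hxx (fun h => hc.one_ne_zero' (by linear_combination -h))
  have hshared : y1 = y0 := by
    refine hc.shared_endpoint (m := m) ?_ ?_ hy1 hy0 (hm1m x1 hx1) (hm1m x0 hx0) hy1AP hy0AP
    · rw [← hfeq1]; exact hf.1
    · rw [← hfeq]; exact hf0.1
  rw [hfeq1, hshared]
  exact Sym2.mem_mk_right x1 y0

lemma share_endpoint_bundle (hc : Cyc K G T Z) {b : ZMod L}
    (hgap : T.edgeSet ∩ Fb G Z b = ∅)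
    (huniq : ∀ j : ZMod L, j ≠ b → (T.edgeSet ∩ Fb G Z j).Nonempty)
    {i : ZMod L} (h1 : i ≠ b) (h2 : i ≠ b + 1)
    {wci : V} (hwZ : wci ∈ Z i) (hwAP : wci ∉ hc.AnyPend)
    (hwmem : ∀ f ∈ T.edgeSet ∩ Fb G Z (i - 1), wci ∈ f) :
    ∀ f ∈ T.edgeSet ∩ Fb G Z i, wci ∈ f := by
  intro f hf
  obtain ⟨α, β, rfl, hGadj, hα, hβ⟩ := hc.mem_Fb_elim hf.2
  have hαAP : α ∉ hc.AnyPend := by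
    refine hc.nonpend_endpoint (show s(β, α) ∈ T.edgeSet by rw [Sym2.eq_swap]; exact hf.1)
      hβ hα ?_ ?_
    · intro hcon
      exact hc.one_ne_zero' (by linear_combination hcon)
    · intro hcon
      have h5 := hc.typeB_at_gap_succ hgap hf.1 hα hβ (by rw [Sym2.eq_swap]; exact hcon)
      exact h2 h5
  obtain ⟨f1, hf1⟩ := huniq (i - 1) (fun h => h2 (by linear_combination h))
  obtain ⟨x1, y1, hfe1, hx1, hy1, hy1AP⟩ := hc.endpoint_data hgap h1 h2 f1 hf1
  have hin := hwmem f1 hf1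
  rw [hfe1] at hin
  have hwy : wci = y1 := by
    rcases Sym2.mem_iff.mp hin with h | h
    · exfalso
      have e : i = i - 1 := hc.block_unique (h ▸ hwZ) hx1
      exact hc.one_ne_zero' (by linear_combination e)
    · exact h
  have hx1Z : x1 ∉ Z i :=
    hc.not_mem_block hx1 (fun h => hc.one_ne_zero' (by linear_combination -h))
  have hβZ : β ∉ Z i :=
    hc.not_mem_block hβ (fun h => hc.one_ne_zero' (by linear_combination h))
  have hy1α : y1 = α := by
    refine hc.shared_endpoint (m := i) ?_
      (show s(β, α) ∈ T.edgeSet by rw [Sym2.eq_swap]; exact hf.1)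
      hy1 hα hx1Z hβZ hy1AP hαAP
    rw [← hfe1]; exact hf1.1
  rw [hwy, hy1α]
  exact Sym2.mem_mk_left α β

end Cyc

/-- (Lemma: how a congestion-`K` spanning tree traverses the basic
`K`-cuts of a cactus cycle, `K` even.) -/
theorem tree_traversal_of_cycle_cuts {V : Type*} [Fintype V] (K : ℕ) (hKpos : 0 < K)
    (hKeven : Even K) (G : SimpleGraph V) (hG : KEdgeConnected G K)
    (T : SimpleGraph V) (hTle : T ≤ G) (hTtree : T.IsTree) (hTcong : CongAtMost G T K)
    (ℓ : ℕ) (hℓ : 3 ≤ ℓ) (Z : ZMod ℓ → Set V)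
    (hdisj : ∀ i j : ZMod ℓ, i ≠ j → Disjoint (Z i) (Z j))
    (hne : ∀ i : ZMod ℓ, (Z i).Nonempty)
    (hunion : (⋃ i, Z i) = Set.univ)
    (hcuts : ∀ i : ZMod ℓ, IsKCut G K (Z i))
    (hnc : ∀ i : ZMod ℓ, ∀ Y : Set V, IsKCut G K Y → ¬ Crossing (Z i) Y)
    (hhalf : ∀ i : ZMod ℓ, (cutEdges G (Z i) ∩ cutEdges G (Z (i + 1))).ncard = K / 2)
    (hfar : ∀ i i' : ZMod ℓ, i' ≠ i → i' ≠ i + 1 → i' ≠ i - 1 →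
      cutEdges G (Z i) ∩ cutEdges G (Z i') = ∅) :
    ∃ g : ZMod ℓ, ∃ w : ZMod ℓ → V, (∀ i, w i ∈ Z i) ∧
      (∀ i : ZMod ℓ, i ≠ g → i ≠ g - 1 → i ≠ g - 2 →
        T.edgeSet ∩ cutEdges G (Z i) ∩ cutEdges G (Z (i + 1)) = {s(w i, w (i + 1))}) ∧
      (s(w g, w (g + 1)) ∈ T.edgeSet ∩ cutEdges G (Z g) ∩ cutEdges G (Z (g + 1)) ∧
        ∀ e ∈ T.edgeSet ∩ cutEdges G (Z g) ∩ cutEdges G (Z (g + 1)), w (g + 1) ∈ e) ∧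
      (s(w (g - 2), w (g - 1)) ∈
          T.edgeSet ∩ cutEdges G (Z (g - 1)) ∩ cutEdges G (Z (g - 2)) ∧
        ∀ e ∈ T.edgeSet ∩ cutEdges G (Z (g - 1)) ∩ cutEdges G (Z (g - 2)),
          w (g - 2) ∈ e) ∧
      T.edgeSet ∩ cutEdges G (Z g) ∩ cutEdges G (Z (g - 1)) = ∅ := by
  classical
  haveI : NeZero ℓ := ⟨by omega⟩
  have hc : Cyc K G T Z := ⟨hKpos, hG, hTle, hTtree, hTcong, hℓ, hdisj, hne, hunion, hnc, hfar⟩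
  obtain ⟨b, hgap⟩ := hc.gap_exists
  have huniq : ∀ j : ZMod ℓ, j ≠ b → (T.edgeSet ∩ Fb G Z j).Nonempty := by
    intro j hj
    rw [Set.nonempty_iff_ne_empty]
    exact fun h => hj (hc.gap_unique h hgap)
  choose wc hwc1 hwc2 hwc3 using fun (m : ZMod ℓ) (h1 : m ≠ b) (h2 : m ≠ b + 1) =>
    hc.center_exists hgap huniq h1 h2
  have hbm1 : b - 1 ≠ b := fun h => hc.one_ne_zero' (by linear_combination -h)
  have hbm1' : b - 1 ≠ b + 1 := fun h => hc.two_ne_zero' (by linear_combination -h)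
  have hb2 : b + 1 + 1 ≠ b := hc.succ_succ_ne b
  have hb2' : b + 1 + 1 ≠ b + 1 := hc.succ_ne (b + 1)
  have hb1 : (b + 1 : ZMod ℓ) ≠ b := hc.succ_ne b
  have eA : (b + 1 : ZMod ℓ) - 1 = b := by ring
  have eB : (b + 1 : ZMod ℓ) - 2 = b - 1 := by ring
  have e21 : (b + 1 + 1 : ZMod ℓ) - 1 = b + 1 := by ring
  have hFb' : cutEdges G (Z b) ∩ cutEdges G (Z (b - 1)) = Fb G Z (b - 1) := by
    show _ = cutEdges G (Z (b - 1)) ∩ cutEdges G (Z (b - 1 + 1))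
    rw [sub_add_cancel, Set.inter_comm]
  obtain ⟨h0, hh0⟩ := huniq (b - 1) hbm1
  obtain ⟨aa0, bb0, hh0eq, -, haa0, hbb0⟩ := hc.mem_Fb_elim hh0.2
  have hbb0' : bb0 ∈ Z b := by rwa [sub_add_cancel] at hbb0
  have hshareBm1 := hc.share_endpoint_bundle hgap huniq hbm1 hbm1' (hwc1 _ hbm1 hbm1')
    (hwc2 _ hbm1 hbm1') (hwc3 _ hbm1 hbm1')
  have haa0w : aa0 = wc (b - 1) hbm1 hbm1' := by
    have hin := hshareBm1 h0 hh0
    rw [hh0eq] at hin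
    rcases Sym2.mem_iff.mp hin with h | h
    · exact h.symm
    · exfalso
      have hbbZ : bb0 ∈ Z (b - 1) := by rw [← h]; exact hwc1 _ hbm1 hbm1'
      have e : b = b - 1 := hc.block_unique hbb0' hbbZ
      exact hc.one_ne_zero' (by linear_combination e)
  obtain ⟨f0, hf0⟩ := huniq (b + 1) hb1
  obtain ⟨cc0, dd0, hf0eq, -, hcc0, hdd0⟩ := hc.mem_Fb_elim hf0.2
  have hdd0w : dd0 = wc (b + 1 + 1) hb2 hb2' := by
    have hin := hwc3 (b + 1 + 1) hb2 hb2' f0 (by rw [e21]; exact hf0)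
    rw [hf0eq] at hin
    rcases Sym2.mem_iff.mp hin with h | h
    · exfalso
      have hwcZ : wc (b + 1 + 1) hb2 hb2' ∈ Z (b + 1) := by rw [h]; exact hcc0
      have e : b + 1 + 1 = b + 1 := hc.block_unique (hwc1 _ hb2 hb2') hwcZ
      exact hb2' e
    · exact h.symm
  set w : ZMod ℓ → V := fun m =>
    if h1 : m = b then bb0 else if h2 : m = b + 1 then cc0 else wc m h1 h2 with hwdef
  have hwb : w b = bb0 := by rw [hwdef]; simp
  have hwb1 : w (b + 1) = cc0 := by rw [hwdef]; simp [hb1]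
  have hwother : ∀ (m : ZMod ℓ) (h1 : m ≠ b) (h2 : m ≠ b + 1), w m = wc m h1 h2 := by
    intro m h1 h2
    rw [hwdef]
    simp [h1, h2]
  refine ⟨b + 1, w, ?_, ?_, ⟨?_, ?_⟩, ⟨?_, ?_⟩, ?_⟩
  · intro i
    by_cases h1 : i = b
    · subst h1; rw [hwb]; exact hbb0'
    by_cases h2 : i = b + 1
    · subst h2; rw [hwb1]; exact hcc0
    rw [hwother i h1 h2]; exact hwc1 i h1 h2
  · intro i hg1 hg2 hg3
    rw [eA] at hg2
    rw [eB] at hg3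
    obtain ⟨f, hf⟩ := huniq i hg2
    obtain ⟨α, β, hfeq, -, hα, hβ⟩ := hc.mem_Fb_elim hf.2
    rw [hfeq] at hf
    rcases hc.bundle_edge_cases hf.1 hα hβ with ⟨hsub, -, -⟩ | ⟨hsub, -, -⟩ | ⟨huni, -, -⟩
    · exact absurd (hc.typeB_at_gap_succ hgap hf.1 hα hβ hsub) hg1
    · exact absurd (hc.typeC_at_gap_pred hgap hf.1 hα hβ hsub) hg3
    · have hset : T.edgeSet ∩ Fb G Z i = {s(α, β)} :=
        Set.eq_singleton_iff_unique_mem.mpr ⟨hf, huni⟩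
      have hip1b : i + 1 ≠ b := fun h => hg3 (by linear_combination h)
      have hip1b1 : i + 1 ≠ b + 1 := fun h => hg2 (by linear_combination h)
      have hβw : β = wc (i + 1) hip1b hip1b1 := by
        have hin := hwc3 (i + 1) hip1b hip1b1 (s(α, β))
          (by rw [show i + 1 - 1 = i from by ring]; exact hf)
        rcases Sym2.mem_iff.mp hin with h | h
        · exfalso
          have hwcZ : wc (i + 1) hip1b hip1b1 ∈ Z i := by rw [h]; exact hα
          have e : i + 1 = i := hc.block_unique (hwc1 _ hip1b hip1b1) hwcZ
          exact hc.one_ne_zero' (by linear_combination e)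
        · exact h.symm
      have hαw : α = wc i hg2 hg1 := by
        have hin := hc.share_endpoint_bundle hgap huniq hg2 hg1 (hwc1 _ hg2 hg1)
          (hwc2 _ hg2 hg1) (hwc3 _ hg2 hg1) (s(α, β)) hf
        rcases Sym2.mem_iff.mp hin with h | h
        · exact h.symm
        · exfalso
          have hwcZ : wc i hg2 hg1 ∈ Z (i + 1) := by rw [h]; exact hβ
          have e : i = i + 1 := hc.block_unique (hwc1 _ hg2 hg1) hwcZ
          exact hc.one_ne_zero' (by linear_combination -e)
      rw [Set.inter_assoc]
      show T.edgeSet ∩ Fb G Z i = _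
      rw [hset, hαw, hβw, hwother i hg2 hg1, hwother (i + 1) hip1b hip1b1]
  · rw [Set.inter_assoc, hwb1, hwother (b + 1 + 1) hb2 hb2', ← hdd0w, ← hf0eq]
    exact hf0
  · intro e he
    rw [Set.inter_assoc] at he
    rw [hwother (b + 1 + 1) hb2 hb2']
    exact hwc3 (b + 1 + 1) hb2 hb2' e (by rw [e21]; exact he)
  · rw [eA, eB, Set.inter_assoc, hFb', hwb, hwother (b - 1) hbm1 hbm1', ← haa0w, ← hh0eq]
    exact hh0
  · intro e he
    rw [eA, eB, Set.inter_assoc, hFb'] at he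
    rw [eB, hwother (b - 1) hbm1 hbm1']
    exact hshareBm1 e he
  · rw [eA, Set.inter_assoc, Set.inter_comm (cutEdges G (Z (b + 1)))]
    exact hgap
end

section
/- Let G be a finite simple graph, let (T, w) be a safe tree in G (with safety parameter K), let u be a vertex of T, and let e be the first edge on the path in T from u to w. Then (T_out(w,e), u), the component of T − e containing u rooted at u, is also a safe tree. -/
open SimpleGraph

variable {V : Type*}

namespace SafeSubtreeAux

variable {V : Type*}

lemma walk_delete (A : SimpleGraph V) (c d : V) {x y : V} (p : A.Walk x y) :
    (A.deleteEdges {s(c,d)}).Reachable x y ∨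
    ((A.deleteEdges {s(c,d)}).Reachable x c ∧ (A.deleteEdges {s(c,d)}).Reachable d y) ∨
    ((A.deleteEdges {s(c,d)}).Reachable x d ∧ (A.deleteEdges {s(c,d)}).Reachable c y) := by
  induction p with
  | nil => exact Or.inl (Reachable.refl _)
  | @cons x' z y' h q ih =>
    by_cases hxz : s(x', z) = s(c, d)
    · rw [Sym2.eq_iff] at hxz
      rcases hxz with ⟨rfl, rfl⟩ | ⟨rfl, rfl⟩
      · rcases ih with h1 | ⟨h1, h2⟩ | ⟨h1, h2⟩
        · exact Or.inr (Or.inl ⟨Reachable.refl _, h1⟩)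
        · exact Or.inl (h1.symm.trans h2)
        · exact Or.inl h2
      · rcases ih with h1 | ⟨h1, h2⟩ | ⟨h1, h2⟩
        · exact Or.inr (Or.inr ⟨Reachable.refl _, h1⟩)
        · exact Or.inl h2
        · exact Or.inl (h1.symm.trans h2)
    · have hB : (A.deleteEdges {s(c,d)}).Adj x' z := by
        rw [SimpleGraph.deleteEdges_adj]
        exact ⟨h, by simp [hxz]⟩
      rcases ih with h1 | ⟨h1, h2⟩ | ⟨h1, h2⟩
      · exact Or.inl (hB.reachable.trans h1)
      · exact Or.inr (Or.inl ⟨hB.reachable.trans h1, h2⟩)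
      · exact Or.inr (Or.inr ⟨hB.reachable.trans h1, h2⟩)

lemma reach_transfer {B C : SimpleGraph V} {S : Set V}
    (hcl : ∀ ⦃p q : V⦄, B.Adj p q → p ∈ S → q ∈ S)
    (htr : ∀ ⦃p q : V⦄, B.Adj p q → p ∈ S → q ∈ S → C.Adj p q)
    {x y : V} (hx : x ∈ S) (h : B.Reachable x y) : C.Reachable x y := by
  obtain ⟨p⟩ := h
  revert hx
  induction p with
  | nil => exact fun _ => Reachable.refl _
  | @cons x' z y' h q ih =>
    exact fun hx => ((htr h hx (hcl h hx)).reachable).trans (ih (hcl h hx))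

lemma lift_coe {W : Type*} {G : SimpleGraph W} (A : G.Subgraph) {x y : W}
    (hx : x ∈ A.verts) (hy : y ∈ A.verts)
    (h : A.spanningCoe.Reachable x y) : A.coe.Reachable ⟨x, hx⟩ ⟨y, hy⟩ := by
  obtain ⟨p⟩ := h
  revert hx hy
  induction p with
  | nil => exact fun hx hy => Reachable.refl _
  | @cons x' z y' h q ih =>
    intro hx hy
    have hz : z ∈ A.verts := A.edge_vert h.symm
    exact (SimpleGraph.Adj.reachable (show A.coe.Adj ⟨x', hx⟩ ⟨z, hz⟩ from h)).trans (ih hz hy)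

end SafeSubtreeAux


/-- If `(T, w)` is a safe tree, `u` a vertex of `T` and `e` the first
edge on the path in `T` from `u` to `w` (i.e. `e` is an edge of `T` incident to `u`
whose removal separates `u` from `w`), then `(T_out(w,e), u)` is also a safe tree. -/
theorem safe_subtree {V : Type*} [Fintype V] (K : ℕ) (G : SimpleGraph V)
    (H : G.Subgraph) (w : V) (htree : H.coe.IsTree) (hw : w ∈ H.verts)
    (hsafe : SafeTree G K H w)
    (u : V) (hu : u ∈ H.verts) (e : Sym2 V) (he : e ∈ H.edgeSet)
    (hue : u ∈ e) (huout : u ∈ treeOut G H w e) :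
    (H.induce (treeOut G H w e)).coe.IsTree ∧
      SafeTree G K (H.induce (treeOut G H w e)) u := by
  classical
  obtain ⟨t, rfl⟩ := Sym2.mem_iff_exists.mp hue
  have hadj_ut : H.Adj u t := Subgraph.mem_edgeSet.mp he
  have htv : t ∈ H.verts := H.edge_vert hadj_ut.symm
  have hmemS : ∀ {x : V}, x ∈ treeOut G H w s(u, t) ↔
      x ∈ H.verts ∧ ¬ (H.deleteEdges {s(u, t)}).spanningCoe.Reachable w x := Iff.rfl
  have huv2 : u ∈ H.verts := (hmemS.mp huout).1
  have hwu : ¬ (H.deleteEdges {s(u, t)}).spanningCoe.Reachable w u := (hmemS.mp huout).2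
  have hDeq : H.spanningCoe.deleteEdges {s(u, t)} = (H.deleteEdges {s(u, t)}).spanningCoe :=
    Subgraph.deleteEdges_spanningCoe_eq _
  have hDadj : ∀ {p q : V}, (H.deleteEdges {s(u, t)}).spanningCoe.Adj p q ↔
      (H.Adj p q ∧ s(p, q) ≠ s(u, t)) := by
    intro p q
    simp [Subgraph.spanningCoe_adj, Subgraph.deleteEdges_adj]
  have hspan : ∀ {x y : V}, x ∈ H.verts → y ∈ H.verts → H.spanningCoe.Reachable x y := by
    intro x y hx hy
    exact (htree.isConnected.preconnected ⟨x, hx⟩ ⟨y, hy⟩).map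
      (⟨Subtype.val, fun {a b} h => h⟩ : H.coe →g H.spanningCoe)
  have fact1 : ∀ x ∈ H.verts, (H.deleteEdges {s(u, t)}).spanningCoe.Reachable w x ∨
      (H.deleteEdges {s(u, t)}).spanningCoe.Reachable u x := by
    intro x hx
    obtain ⟨p⟩ := hspan hw hx
    rcases SafeSubtreeAux.walk_delete H.spanningCoe u t p with h1 | ⟨h1, h2⟩ | ⟨h1, h2⟩
    · rw [hDeq] at h1; exact Or.inl h1
    · rw [hDeq] at h1; exact absurd h1 hwu
    · rw [hDeq] at h2; exact Or.inr h2
  have hchar : ∀ {x : V}, x ∈ treeOut G H w s(u, t) ↔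
      x ∈ H.verts ∧ (H.deleteEdges {s(u, t)}).spanningCoe.Reachable u x := by
    intro x
    rw [hmemS]
    constructor
    · rintro ⟨hx, hnr⟩; exact ⟨hx, (fact1 x hx).resolve_left hnr⟩
    · rintro ⟨hx, hr⟩; exact ⟨hx, fun hwr => hwu (hwr.trans hr.symm)⟩
  have hScl : ∀ ⦃p q : V⦄, (H.deleteEdges {s(u, t)}).spanningCoe.Adj p q →
      p ∈ treeOut G H w s(u, t) → q ∈ treeOut G H w s(u, t) := by
    intro p q hpq hp
    have hH : H.Adj p q := (hDadj.mp hpq).1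
    exact hchar.mpr ⟨H.edge_vert hH.symm, (hchar.mp hp).2.trans hpq.reachable⟩
  have hts : t ∉ treeOut G H w s(u, t) := by
    intro htS
    have hru : (H.deleteEdges {s(u, t)}).spanningCoe.Reachable u t := (hchar.mp htS).2
    have hu' : u ∈ (H.deleteEdges {s(u, t)}).verts := by
      rw [Subgraph.deleteEdges_verts]; exact huv2
    have ht' : t ∈ (H.deleteEdges {s(u, t)}).verts := by
      rw [Subgraph.deleteEdges_verts]; exact htv
    have hco := SafeSubtreeAux.lift_coe _ hu' ht' hru
    have hbr := (isAcyclic_iff_forall_adj_isBridge.mp htree.IsAcyclic)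
      (show H.coe.Adj ⟨u, huv2⟩ ⟨t, htv⟩ from hadj_ut)
    rw [isBridge_iff] at hbr
    refine hbr ?_
    refine hco.map
      (⟨fun x => ⟨x.1, x.2⟩, ?_⟩ : (H.deleteEdges {s(u, t)}).coe →g
        (H.coe \ fromEdgeSet {s((⟨u, huv2⟩ : H.verts), (⟨t, htv⟩ : H.verts))}))
    intro a b hab
    have hab' : H.Adj a.1 b.1 ∧ s(a.1, b.1) ∉ ({s(u, t)} : Set (Sym2 V)) :=
      (Subgraph.deleteEdges_adj _ _ _).mp hab
    refine ⟨hab'.1, ?_⟩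
    rw [fromEdgeSet_adj]
    rintro ⟨hmem, -⟩
    apply hab'.2
    have h2 := congrArg (Sym2.map Subtype.val) (Set.mem_singleton_iff.mp hmem)
    simpa using h2
  have htr' : ∀ ⦃p q : V⦄, (H.deleteEdges {s(u, t)}).spanningCoe.Adj p q →
      p ∈ treeOut G H w s(u, t) → q ∈ treeOut G H w s(u, t) →
      (H.induce (treeOut G H w s(u, t))).spanningCoe.Adj p q := by
    intro p q hpq hp hq
    exact ⟨hp, hq, (hDadj.mp hpq).1⟩
  have hconn : (H.induce (treeOut G H w s(u, t))).coe.Connected := by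
    rw [connected_iff]
    refine ⟨?_, ⟨⟨u, huout⟩⟩⟩
    intro x y
    have hx : ↑x ∈ treeOut G H w s(u, t) := x.2
    have hy : ↑y ∈ treeOut G H w s(u, t) := y.2
    have h1 := (hchar.mp hx).2
    have h2 := (hchar.mp hy).2
    have hsp : (H.induce (treeOut G H w s(u, t))).spanningCoe.Reachable ↑x ↑y :=
      SafeSubtreeAux.reach_transfer hScl htr' hx (h1.symm.trans h2)
    exact SafeSubtreeAux.lift_coe _ x.2 y.2 hsp
  have hacyc : (H.induce (treeOut G H w s(u, t))).coe.IsAcyclic := by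
    intro v c hc
    refine htree.IsAcyclic
      (c.map (⟨fun x => ⟨x.1, (hmemS.mp x.2).1⟩, fun {a b} h => h.2.2⟩ :
        (H.induce (treeOut G H w s(u, t))).coe →g H.coe))
      ((SimpleGraph.Walk.map_isCycle_iff_of_injective ?_).mpr hc)
    intro a b hab
    have h1 := congrArg (Subtype.val : H.verts → V) hab
    exact Subtype.ext h1
  refine ⟨⟨hconn, hacyc⟩, ?_⟩
  intro f hf
  revert hf
  induction f using Sym2.ind with
  | _ a b =>
  intro hf
  have hab : (H.induce (treeOut G H w s(u, t))).Adj a b := Subgraph.mem_edgeSet.mp hf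
  have haS : a ∈ treeOut G H w s(u, t) := hab.1
  have hbS : b ∈ treeOut G H w s(u, t) := hab.2.1
  have habH : H.Adj a b := hab.2.2
  have hfe : s(a, b) ≠ s(u, t) := by
    intro hh
    rw [Sym2.eq_iff] at hh
    rcases hh with ⟨rfl, rfl⟩ | ⟨rfl, rfl⟩
    · exact hts hbS
    · exact hts haS
  have hDfadj : ∀ {p q : V}, (H.deleteEdges {s(a, b)}).spanningCoe.Adj p q ↔
      (H.Adj p q ∧ s(p, q) ≠ s(a, b)) := by
    intro p q
    simp [Subgraph.spanningCoe_adj, Subgraph.deleteEdges_adj]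
  have hDf'adj : ∀ {p q : V},
      ((H.induce (treeOut G H w s(u, t))).deleteEdges {s(a, b)}).spanningCoe.Adj p q ↔
      ((p ∈ treeOut G H w s(u, t) ∧ q ∈ treeOut G H w s(u, t) ∧ H.Adj p q) ∧
        s(p, q) ≠ s(a, b)) := by
    intro p q
    simp [Subgraph.spanningCoe_adj, Subgraph.deleteEdges_adj, Subgraph.induce_adj]
  have hLE1 : (H.deleteEdges {s(u, t)}).spanningCoe.deleteEdges {s(a, b)} ≤
      (H.deleteEdges {s(a, b)}).spanningCoe := by
    intro p q hpq
    rw [SimpleGraph.deleteEdges_adj] at hpq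
    exact hDfadj.mpr ⟨(hDadj.mp hpq.1).1, by simpa using hpq.2⟩
  have hwx : ∀ x, x ∈ H.verts → x ∉ treeOut G H w s(u, t) →
      (H.deleteEdges {s(u, t)}).spanningCoe.Reachable w x := by
    intro x hx hxn
    by_contra h
    exact hxn (hmemS.mpr ⟨hx, h⟩)
  have claimA : ∀ x, x ∈ H.verts → x ∉ treeOut G H w s(u, t) →
      (H.deleteEdges {s(a, b)}).spanningCoe.Reachable w x := by
    intro x hx hxn
    obtain ⟨p⟩ := hwx x hx hxn
    rcases SafeSubtreeAux.walk_delete _ a b p with h1 | ⟨h1, h2⟩ | ⟨h1, h2⟩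
    · exact h1.mono hLE1
    · exact absurd (h1.mono (SimpleGraph.deleteEdges_le _)) (hmemS.mp haS).2
    · exact absurd (h1.mono (SimpleGraph.deleteEdges_le _)) (hmemS.mp hbS).2
  have claimWU : (H.deleteEdges {s(a, b)}).spanningCoe.Reachable w u := by
    obtain ⟨p⟩ := hwx t htv hts
    rcases SafeSubtreeAux.walk_delete _ a b p with h1 | ⟨h1, h2⟩ | ⟨h1, h2⟩
    · exact (h1.mono hLE1).trans
        (SimpleGraph.Adj.reachable
          (hDfadj.mpr ⟨hadj_ut.symm, fun hh => hfe (hh.symm.trans Sym2.eq_swap)⟩))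
    · exact absurd (h1.mono (SimpleGraph.deleteEdges_le _)) (hmemS.mp haS).2
    · exact absurd (h1.mono (SimpleGraph.deleteEdges_le _)) (hmemS.mp hbS).2
  have hLE4 : (H.deleteEdges {s(a, b)}).spanningCoe.deleteEdges {s(u, t)} ≤
      (H.deleteEdges {s(u, t)}).spanningCoe := by
    intro p q hpq
    rw [SimpleGraph.deleteEdges_adj] at hpq
    exact hDadj.mpr ⟨(hDfadj.mp hpq.1).1, by simpa using hpq.2⟩
  have claim2bwd : ∀ x, x ∈ treeOut G H w s(u, t) →
      (H.deleteEdges {s(a, b)}).spanningCoe.Reachable w x →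
      ((H.induce (treeOut G H w s(u, t))).deleteEdges {s(a, b)}).spanningCoe.Reachable u x := by
    intro x hxS hr
    obtain ⟨p⟩ := hr
    rcases SafeSubtreeAux.walk_delete _ u t p with h1 | ⟨h1, h2⟩ | ⟨h1, h2⟩
    · exact absurd (h1.mono hLE4) (hmemS.mp hxS).2
    · exact absurd (h1.mono hLE4) hwu
    · refine SafeSubtreeAux.reach_transfer ?_ ?_ huout h2
      · intro p' q' hpq hp
        exact hScl (hLE4 hpq) hp
      · intro p' q' hpq hp hq
        rw [SimpleGraph.deleteEdges_adj] at hpq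
        exact hDf'adj.mpr ⟨⟨hp, hq, (hDfadj.mp hpq.1).1⟩, (hDfadj.mp hpq.1).2⟩
  have claim2fwd : ∀ x, x ∈ treeOut G H w s(u, t) →
      ((H.induce (treeOut G H w s(u, t))).deleteEdges {s(a, b)}).spanningCoe.Reachable u x →
      (H.deleteEdges {s(a, b)}).spanningCoe.Reachable w x := by
    intro x hxS hr
    refine claimWU.trans (hr.mono ?_)
    intro p q hpq
    have h2 := hDf'adj.mp hpq
    exact hDfadj.mpr ⟨h2.1.2.2, h2.2⟩
  have hEq : treeOut G (H.induce (treeOut G H w s(u, t))) u s(a, b) =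
      treeOut G H w s(a, b) := by
    ext x
    constructor
    · rintro ⟨hxS, hnr⟩
      exact ⟨(hmemS.mp hxS).1, fun hr => hnr (claim2bwd x hxS hr)⟩
    · rintro ⟨hxv, hnr⟩
      have hxS : x ∈ treeOut G H w s(u, t) := by
        by_contra hxn
        exact hnr (claimA x hxv hxn)
      exact ⟨hxS, fun hr => hnr (claim2fwd x hxS hr)⟩
  rw [hEq]
  exact hsafe s(a, b) (Subgraph.mem_edgeSet.mpr habH)
end

section
/- Let G be a finite simple graph, let (T, v) be a rooted tree in G whose vertex set V(T) satisfies |∂(V(T))| = K, and let (u, v) be an edge of G with u ∉ V(T) (so (u,v) ∈ ∂(V(T))). Then (T ∪ {(u,v)}, u) is a safe tree if and only if (T, v) is a safe tree. -/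
open SimpleGraph

variable {V : Type*}

lemma reach_eq_of_no_nbr {B : SimpleGraph V} {u x : V} (h : ∀ y, ¬ B.Adj u y)
    (hr : B.Reachable u x) : x = u := by
  obtain ⟨w⟩ := hr
  cases w with
  | nil => rfl
  | cons h' p => exact absurd h' (h _)

lemma reach_iff_of_isolated {A B : SimpleGraph V} {u v : V}
    (hAB : ∀ a b, A.Adj a b → B.Adj a b)
    (hBadj : ∀ a b, B.Adj a b → A.Adj a b ∨ s(a, b) = s(u, v))
    (hiso : ∀ y, ¬ A.Adj u y) (hBuv : B.Adj u v) (x : V) :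
    B.Reachable u x ↔ x = u ∨ A.Reachable v x := by
  constructor
  · intro hr
    have key : ∀ a b : V, B.Reachable a b → (a = u ∨ A.Reachable v a) →
        (b = u ∨ A.Reachable v b) := by
      intro a b hab
      obtain ⟨w⟩ := hab
      induction w with
      | nil => exact id
      | cons h' p ih =>
        intro ha
        apply ih
        rcases hBadj _ _ h' with hA | hs
        · rcases ha with rfl | ha
          · exact absurd hA (hiso _)
          · exact Or.inr (ha.trans hA.reachable)
        · rw [Sym2.eq, Sym2.rel_iff'] at hs
          rcases hs with ⟨rfl, rfl⟩ | ⟨rfl, rfl⟩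
          · exact Or.inr (Reachable.refl _)
          · exact Or.inl rfl
    exact key u x hr (Or.inl rfl)
  · rintro (rfl | hr)
    · exact Reachable.refl _
    · exact hBuv.reachable.trans (hr.mono hAB)


/-- Let `(T, v)` be a rooted tree with `|∂(V(T))| = K` and let
`(u, v)` be an edge of `G` with `u ∉ V(T)`. Then `(T ∪ {(u,v)}, u)` is safe iff
`(T, v)` is safe. -/
theorem safe_extend_edge {V : Type*} [Fintype V] (K : ℕ) (G : SimpleGraph V)
    (H : G.Subgraph) (u v : V) (htree : H.coe.IsTree) (hv : v ∈ H.verts)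
    (hu : u ∉ H.verts) (hcut : (cutEdges G H.verts).ncard = K)
    (hadj : G.Adj u v) :
    SafeTree G K (H ⊔ G.subgraphOfAdj hadj) u ↔ SafeTree G K H v := by
  set H' := H ⊔ G.subgraphOfAdj hadj with hH'
  have hHuv : s(u, v) ∉ H.edgeSet := fun h => hu (Subgraph.mem_edgeSet.mp h).fst_mem
  have hadjH' : ∀ a b, H'.Adj a b ↔ H.Adj a b ∨ s(a, b) = s(u, v) := by
    intro a b
    rw [hH', Subgraph.sup_adj, subgraphOfAdj_adj, eq_comm]
  have hE : H'.edgeSet = insert s(u, v) H.edgeSet := by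
    rw [hH', Subgraph.edgeSet_sup, edgeSet_subgraphOfAdj, Set.union_singleton]
  have hVerts : H'.verts = insert u H.verts := by
    rw [hH', Subgraph.verts_sup, subgraphOfAdj_verts]
    ext x
    simp only [Set.mem_union, Set.mem_insert_iff, Set.mem_singleton_iff]
    constructor
    · rintro (h | h | rfl)
      · exact Or.inr h
      · exact Or.inl h
      · exact Or.inr hv
    · rintro (rfl | h)
      · exact Or.inr (Or.inl rfl)
      · exact Or.inl h
  have hiso : ∀ (s : Set (Sym2 V)) y, ¬ ((H.deleteEdges s).spanningCoe.Adj u y) := by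
    intro s y hy
    exact hu ((Subgraph.deleteEdges_adj _ _ _).mp hy).1.fst_mem
  -- treeOut for the new edge
  have houtA : treeOut G H' u s(u, v) = H.verts := by
    have hnonbr : ∀ y, ¬ ((H'.deleteEdges {s(u, v)}).spanningCoe.Adj u y) := by
      intro y hy
      obtain ⟨hy1, hy2⟩ := (Subgraph.deleteEdges_adj _ _ _).mp hy
      rcases (hadjH' _ _).mp hy1 with h | h
      · exact hu h.fst_mem
      · exact hy2 h
    ext x
    simp only [treeOut, Set.mem_setOf_eq, hVerts, Set.mem_insert_iff]
    constructor
    · rintro ⟨rfl | hx, hr⟩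
      · exact absurd (Reachable.refl _) hr
      · exact hx
    · intro hx
      refine ⟨Or.inr hx, fun hr => ?_⟩
      exact hu ((reach_eq_of_no_nbr hnonbr hr) ▸ hx)
  -- treeOut for old edges
  have houtB : ∀ e ∈ H.edgeSet, treeOut G H' u e = treeOut G H v e := by
    intro e he
    have hne : s(u, v) ≠ e := fun h => hHuv (h ▸ he)
    have hreach := reach_iff_of_isolated
      (A := (H.deleteEdges {e}).spanningCoe) (B := (H'.deleteEdges {e}).spanningCoe)
      (u := u) (v := v)
      (fun a b hab => by
        obtain ⟨h1, h2⟩ := (Subgraph.deleteEdges_adj _ _ _).mp hab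
        exact (Subgraph.deleteEdges_adj _ _ _).mpr ⟨(hadjH' a b).mpr (Or.inl h1), h2⟩)
      (fun a b hab => by
        obtain ⟨h1, h2⟩ := (Subgraph.deleteEdges_adj _ _ _).mp hab
        rcases (hadjH' a b).mp h1 with h | h
        · exact Or.inl ((Subgraph.deleteEdges_adj _ _ _).mpr ⟨h, h2⟩)
        · exact Or.inr h)
      (hiso {e})
      ((Subgraph.deleteEdges_adj _ _ _).mpr
        ⟨(hadjH' u v).mpr (Or.inr rfl), by simpa using hne⟩)
    ext x
    simp only [treeOut, Set.mem_setOf_eq, hVerts, Set.mem_insert_iff, hreach, not_or]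
    constructor
    · rintro ⟨rfl | hx, hne', hr⟩
      · exact absurd rfl hne'
      · exact ⟨hx, hr⟩
    · rintro ⟨hx, hr⟩
      exact ⟨Or.inr hx, fun h => hu (h ▸ hx), hr⟩
  constructor
  · intro h e he
    have := h e (by rw [hE]; exact Set.mem_insert_of_mem _ he)
    rwa [houtB e he] at this
  · intro h e he
    rw [hE, Set.mem_insert_iff] at he
    rcases he with rfl | he
    · rw [houtA]; exact hcut
    · rw [houtB e he]; exact h e he
end
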